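/- arXiv:1008.3716 — 3 statements merged into one kernel-verified Lean document; each statement's English description precedes it below -/
import Mathlib

section
/- Let y_F be the linear chain with nearest-neighbor spacing Fε, let α > 0, and suppose γ₂ := min{ φ''(F) + 4 φ''(2F), (φ'(F) + 2 φ'(2F))/F } > 0. Given f ∈ 𝒰, let u^{a,b}, u^{CB,b} ∈ 𝒰 satisfy δ(E^a+E^b)(y_F)[v] + δ²(E^a+E^b)(y_F)[u^{a,b}, v] = ⟨f, v⟩ and δ(E^CB+E^b)(y_F)[v] + δ²(E^CB+E^b)(y_F)[u^{CB,b}, v] = ⟨f, v⟩, respectively, for all v ∈ 𝒰. Then ‖(u^{a,b} − u^{CB,b})'‖_{ℓ²_ε} ≤ (ε² max{ |φ''(2F)|, |φ'(2F)/(2F)| } / γ₂) ‖(u^{a,b})'''‖_{ℓ²_ε}. -/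
noncomputable section

open Real Finset

/-- Euclidean norm on `ℝ × ℝ`. -/
def enorm2 (v : ℝ × ℝ) : ℝ := Real.sqrt (v.1 ^ 2 + v.2 ^ 2)

/-- Euclidean dot product on `ℝ × ℝ`. -/
def edot (v w : ℝ × ℝ) : ℝ := v.1 * w.1 + v.2 * w.2

/-- `N`-periodic mean-zero displacements (the space `𝒰`). -/
def IsDisp (N : ℕ) (u : ℤ → ℝ × ℝ) : Prop :=
  (∀ ℓ : ℤ, u (ℓ + (N : ℤ)) = u ℓ) ∧ ∑ ℓ ∈ Finset.Icc (1 : ℤ) (N : ℤ), u ℓ = 0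

/-- Constrained displacements (the space `𝒰̃`): second component vanishes. -/
def IsDisp1D (N : ℕ) (u : ℤ → ℝ × ℝ) : Prop :=
  IsDisp N u ∧ ∀ ℓ : ℤ, (u ℓ).2 = 0

/-- Backward difference `u'_ℓ = (u_ℓ - u_{ℓ-1})/ε`. -/
def bd (ε : ℝ) (u : ℤ → ℝ × ℝ) (ℓ : ℤ) : ℝ × ℝ := ε⁻¹ • (u ℓ - u (ℓ - 1))

/-- The inner product `⟨v,w⟩ = ε ∑_{ℓ=1}^N v_ℓ · w_ℓ`. -/
def ip (N : ℕ) (ε : ℝ) (v w : ℤ → ℝ × ℝ) : ℝ :=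
  ε * ∑ ℓ ∈ Finset.Icc (1 : ℤ) (N : ℤ), edot (v ℓ) (w ℓ)

/-- The norm `‖v‖_{ℓ²_ε}`. -/
def nrm (N : ℕ) (ε : ℝ) (v : ℤ → ℝ × ℝ) : ℝ :=
  Real.sqrt (ε * ∑ ℓ ∈ Finset.Icc (1 : ℤ) (N : ℤ), (enorm2 (v ℓ)) ^ 2)

/-- The atomistic energy `E^a`. -/
def Ea (N : ℕ) (ε : ℝ) (φ : ℝ → ℝ) (y : ℤ → ℝ × ℝ) : ℝ :=
  ε * ∑ ℓ ∈ Finset.Icc (1 : ℤ) (N : ℤ),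
    (φ (enorm2 (bd ε y ℓ)) + φ (enorm2 (bd ε y (ℓ + 1) + bd ε y ℓ)))

/-- The Cauchy–Born energy `E^CB`. -/
def ECB (N : ℕ) (ε : ℝ) (φ : ℝ → ℝ) (y : ℤ → ℝ × ℝ) : ℝ :=
  ε * ∑ ℓ ∈ Finset.Icc (1 : ℤ) (N : ℤ),
    (φ (enorm2 (bd ε y ℓ)) + φ (2 * enorm2 (bd ε y ℓ)))

/-- The bond-angle energy `E^b`. -/
def Eb (N : ℕ) (ε α : ℝ) (y : ℤ → ℝ × ℝ) : ℝ :=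
  ε * ∑ ℓ ∈ Finset.Icc (1 : ℤ) (N : ℤ),
    α * (1 - edot (bd ε y (ℓ + 1)) (bd ε y ℓ) /
      (enorm2 (bd ε y (ℓ + 1)) * enorm2 (bd ε y ℓ)))

/-- The quasi-nonlocal energy `E^QNL`. -/
def EQNL (N K : ℕ) (ε : ℝ) (φ : ℝ → ℝ) (y : ℤ → ℝ × ℝ) : ℝ :=
  ε * ∑ ℓ ∈ Finset.Icc (1 : ℤ) (N : ℤ), φ (enorm2 (bd ε y ℓ))
  + ε * ∑ ℓ ∈ Finset.Icc (1 : ℤ) (K : ℤ), φ (enorm2 (bd ε y (ℓ + 1) + bd ε y ℓ))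
  + ε * ∑ ℓ ∈ Finset.Icc ((K : ℤ) + 2) (N : ℤ), φ (2 * enorm2 (bd ε y ℓ))
  + ε / 2 * φ (2 * enorm2 (bd ε y 1)) + ε / 2 * φ (2 * enorm2 (bd ε y ((K : ℤ) + 1)))

/-- First variation `δE(y)[u] = (d/dt) E(y + t u) |_{t=0}`. -/
def dE (E : (ℤ → ℝ × ℝ) → ℝ) (y u : ℤ → ℝ × ℝ) : ℝ :=
  deriv (fun t : ℝ => E (fun ℓ => y ℓ + t • u ℓ)) 0

/-- Second variation `δ²E(y)[u,v] = (∂²/∂t∂s) E(y + t u + s v) |_{t=s=0}`. -/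
def d2E (E : (ℤ → ℝ × ℝ) → ℝ) (y u v : ℤ → ℝ × ℝ) : ℝ :=
  deriv (fun s : ℝ => deriv (fun t : ℝ => E (fun ℓ => y ℓ + t • u ℓ + s • v ℓ)) 0) 0

/-- The linear chain `y_{F,ℓ} = (Fεℓ, 0)`. -/
def yLin (ε F : ℝ) : ℤ → ℝ × ℝ := fun ℓ => (F * ε * ℓ, 0)

/-- The uniform circular chain of radius `R = Fε/(2 sin(πε))`. -/
def yCirc (ε F : ℝ) : ℤ → ℝ × ℝ := fun ℓ =>
  (F * ε / (2 * Real.sin (π * ε)) * Real.cos (2 * π * ε * ℓ),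
   F * ε / (2 * Real.sin (π * ε)) * Real.sin (2 * π * ε * ℓ))

lemma enorm2_nonneg (v : ℝ × ℝ) : 0 ≤ enorm2 v := Real.sqrt_nonneg _

lemma enorm2_sq (v : ℝ × ℝ) : enorm2 v ^ 2 = v.1 ^ 2 + v.2 ^ 2 :=
  Real.sq_sqrt (by positivity)

lemma enorm2_pair (r : ℝ) (hr : 0 ≤ r) : enorm2 (r, 0) = r := by
  simp [enorm2, Real.sqrt_sq hr]

lemma enorm2_two_smul (v : ℝ × ℝ) : enorm2 ((2:ℝ) • v) = 2 * enorm2 v := by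
  have : ((2:ℝ) • v).1 ^ 2 + ((2:ℝ) • v).2 ^ 2 = 4 * (v.1 ^ 2 + v.2 ^ 2) := by
    simp [Prod.smul_def]; ring
  rw [enorm2, this, show (4:ℝ) = 2^2 by norm_num, Real.sqrt_mul (by positivity),
    Real.sqrt_sq (by norm_num)]
  rfl

lemma bd_yLin {ε F : ℝ} (hε : ε ≠ 0) (ℓ : ℤ) : bd ε (yLin ε F) ℓ = (F, 0) := by
  have : yLin ε F ℓ - yLin ε F (ℓ - 1) = (F * ε, 0) := by
    simp only [yLin, Prod.mk_sub_mk]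
    norm_num
    ring
  rw [bd, this, Prod.smul_mk]
  simp only [smul_zero, smul_eq_mul, Prod.mk.injEq, and_true]
  field_simp
  simp

lemma bd_add_smul (ε t : ℝ) (y u : ℤ → ℝ × ℝ) (ℓ : ℤ) :
    bd ε (fun m => y m + t • u m) ℓ = bd ε y ℓ + t • bd ε u ℓ := by
  simp only [bd, smul_sub, smul_add, smul_smul]
  module

lemma bd_sub (ε : ℝ) (y u : ℤ → ℝ × ℝ) (ℓ : ℤ) :
    bd ε (fun m => y m - u m) ℓ = bd ε y ℓ - bd ε u ℓ := by
  simp only [bd, smul_sub]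
  module

lemma bd_periodic {N : ℕ} {u : ℤ → ℝ × ℝ} (hu : ∀ ℓ : ℤ, u (ℓ + (N:ℤ)) = u ℓ) (ε : ℝ) :
    ∀ ℓ : ℤ, bd ε u (ℓ + (N:ℤ)) = bd ε u ℓ := by
  intro ℓ
  have h2 : ℓ + (N:ℤ) - 1 = (ℓ - 1) + (N:ℤ) := by ring
  simp only [bd, h2, hu]

lemma sum_shift {N : ℕ} (hN : 1 ≤ N) {g : ℤ → ℝ} (hg : ∀ ℓ : ℤ, g (ℓ + (N:ℤ)) = g ℓ) :
    ∑ ℓ ∈ Finset.Icc (1:ℤ) (N:ℤ), g (ℓ + 1) = ∑ ℓ ∈ Finset.Icc (1:ℤ) (N:ℤ), g ℓ := by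
  have hN' : (1:ℤ) ≤ (N:ℤ) := by exact_mod_cast hN
  have h1 : ∑ ℓ ∈ Finset.Icc (1:ℤ) (N:ℤ), g (ℓ + 1)
      = ∑ ℓ ∈ Finset.Icc (2:ℤ) ((N:ℤ) + 1), g ℓ := by
    rw [show Finset.Icc (2:ℤ) ((N:ℤ)+1) = Finset.map (addRightEmbedding 1) (Finset.Icc 1 (N:ℤ))
      by rw [Finset.map_add_right_Icc]; norm_num, Finset.sum_map]
    rfl
  have h2 : Finset.Icc (2:ℤ) ((N:ℤ) + 1) = insert ((N:ℤ)+1) (Finset.Icc (2:ℤ) (N:ℤ)) := by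
    ext x; simp only [Finset.mem_Icc, Finset.mem_insert]; omega
  have h3 : Finset.Icc (1:ℤ) (N:ℤ) = insert (1:ℤ) (Finset.Icc (2:ℤ) (N:ℤ)) := by
    ext x; simp only [Finset.mem_Icc, Finset.mem_insert]; omega
  rw [h1, h2, h3, Finset.sum_insert (by simp), Finset.sum_insert (by simp)]
  congr 1
  rw [show (N:ℤ) + 1 = 1 + (N:ℤ) by ring, hg 1]


lemma hasDerivAt_affine (c a t : ℝ) : HasDerivAt (fun t : ℝ => c + t * a) a t := by
  simpa using ((hasDerivAt_id t).mul_const a).const_add c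

/-- derivative of the squared norm of an affine path -/
lemma hasDerivAt_sqnorm (q a : ℝ × ℝ) :
    HasDerivAt (fun t : ℝ => (q + t • a).1 ^ 2 + (q + t • a).2 ^ 2) (2 * edot q a) 0 := by
  have h1 : HasDerivAt (fun t : ℝ => (q.1 + t * a.1) ^ 2 + (q.2 + t * a.2) ^ 2)
      (2 * (q.1 + 0 * a.1) ^ 1 * a.1 + 2 * (q.2 + 0 * a.2) ^ 1 * a.2) 0 :=
    (((hasDerivAt_affine q.1 a.1 0).pow 2).add ((hasDerivAt_affine q.2 a.2 0).pow 2))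
  have h2 : (fun t : ℝ => (q.1 + t * a.1) ^ 2 + (q.2 + t * a.2) ^ 2)
      = fun t : ℝ => (q + t • a).1 ^ 2 + (q + t • a).2 ^ 2 := by
    funext t; simp [Prod.smul_def]
  rw [h2] at h1
  convert h1 using 1
  simp [edot]; ring

/-- derivative of the norm of an affine path -/
lemma hasDerivAt_enorm (q a : ℝ × ℝ) (hq : 0 < enorm2 q) :
    HasDerivAt (fun t : ℝ => enorm2 (q + t • a)) (edot q a / enorm2 q) 0 := by
  have hne : (q + (0:ℝ) • a).1 ^ 2 + (q + (0:ℝ) • a).2 ^ 2 ≠ 0 := by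
    intro h
    rw [show q + (0:ℝ) • a = q by simp] at h
    rw [enorm2, h, Real.sqrt_zero] at hq; exact lt_irrefl _ hq
  have h := (hasDerivAt_sqnorm q a).sqrt hne
  have : (fun t : ℝ => Real.sqrt ((q + t • a).1 ^ 2 + (q + t • a).2 ^ 2))
      = fun t : ℝ => enorm2 (q + t • a) := by funext t; rfl
  rw [this] at h
  convert h using 1
  have h0 : enorm2 (q + (0:ℝ) • a) = enorm2 q := by norm_num
  rw [show q + (0:ℝ) • a = q by simp, show Real.sqrt (q.1 ^ 2 + q.2 ^ 2) = enorm2 q from rfl]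
  field_simp

variable {φ : ℝ → ℝ}

lemma phi_hasDerivAt (hφ : ContDiffOn ℝ 2 φ (Set.Ioi 0)) {x : ℝ} (hx : 0 < x) :
    HasDerivAt φ (deriv φ x) x := by
  have h1 : DifferentiableAt ℝ φ x :=
    (hφ.differentiableOn (by norm_num)).differentiableAt (isOpen_Ioi.mem_nhds hx)
  exact h1.hasDerivAt

lemma dphi_hasDerivAt (hφ : ContDiffOn ℝ 2 φ (Set.Ioi 0)) {x : ℝ} (hx : 0 < x) :
    HasDerivAt (deriv φ) (deriv (deriv φ) x) x := by
  have h0 : ContDiffOn ℝ 1 (deriv φ) (Set.Ioi 0) :=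
    hφ.deriv_of_isOpen isOpen_Ioi (by norm_num)
  have h1 : DifferentiableAt ℝ (deriv φ) x :=
    (h0.differentiableOn (by norm_num)).differentiableAt (isOpen_Ioi.mem_nhds hx)
  exact h1.hasDerivAt

/-- inner t-derivative of a pair interaction term -/
lemma hasDerivAt_phi_enorm (hφ : ContDiffOn ℝ 2 φ (Set.Ioi 0)) (q a : ℝ × ℝ)
    (hq : 0 < enorm2 q) :
    HasDerivAt (fun t : ℝ => φ (enorm2 (q + t • a)))
      (deriv φ (enorm2 q) * (edot q a / enorm2 q)) 0 := by
  have hn := hasDerivAt_enorm q a hq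
  have hp := phi_hasDerivAt hφ (x := enorm2 (q + (0:ℝ) • a)) (by simpa using hq)
  have := hp.comp 0 hn
  simpa [Function.comp_def, mul_comm] using this

lemma edot_affine (p b a : ℝ × ℝ) :
    (fun s : ℝ => edot (p + s • b) a) = fun s : ℝ => edot p a + s * edot b a := by
  funext s; simp [edot, Prod.smul_def]; ring

/-- outer s-derivative for the pair term -/
lemma hasDerivAt_phi_outer (hφ : ContDiffOn ℝ 2 φ (Set.Ioi 0)) {r : ℝ} (hr : 0 < r)
    (a b : ℝ × ℝ) :
    HasDerivAt (fun s : ℝ => deriv φ (enorm2 ((r,0) + s • b)) *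
        (edot ((r,0) + s • b) a / enorm2 ((r,0) + s • b)))
      (deriv (deriv φ) r * a.1 * b.1 + deriv φ r * (a.2 * b.2) / r) 0 := by
  have hp : enorm2 ((r,0) : ℝ × ℝ) = r := enorm2_pair r hr.le
  have hq : 0 < enorm2 ((r,0) : ℝ × ℝ) := by rw [hp]; exact hr
  have hn := hasDerivAt_enorm (r,0) b hq
  have hd := dphi_hasDerivAt hφ (x := enorm2 ((r,0) + (0:ℝ) • b)) (by simpa using hq)
  have hc : HasDerivAt (fun s : ℝ => deriv φ (enorm2 ((r,0) + s • b)))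
      (deriv (deriv φ) (enorm2 ((r,0) + (0:ℝ) • b)) * (edot (r,0) b / enorm2 (r,0))) 0 := by
    simpa [Function.comp_def, mul_comm] using hd.comp 0 hn
  have he : HasDerivAt (fun s : ℝ => edot ((r,0) + s • b) a) (edot b a) 0 := by
    rw [edot_affine]; simpa using hasDerivAt_affine (edot (r,0) a) (edot b a) 0
  have hne : enorm2 ((r,0) + (0:ℝ) • b) ≠ 0 := by simpa using hq.ne'
  have hquot := he.fun_div hn hne
  have := hc.fun_mul hquot
  refine this.congr_deriv ?_
  have h0 : ((r,0) : ℝ × ℝ) + (0:ℝ) • b = (r,0) := by simp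
  rw [h0, hp]
  simp only [edot]
  field_simp
  ring

lemma edot_comm (v w : ℝ × ℝ) : edot v w = edot w v := by simp [edot]; ring

def angDt (α : ℝ) (qp q ap a : ℝ × ℝ) : ℝ :=
  -(α * (((edot qp a + edot ap q) * (enorm2 qp * enorm2 q)
      - edot qp q * (edot qp ap / enorm2 qp * enorm2 q + enorm2 qp * (edot q a / enorm2 q)))
      / (enorm2 qp * enorm2 q) ^ 2))

lemma edot_quadratic (qp q ap a : ℝ × ℝ) :
    (fun t : ℝ => edot (qp + t • ap) (q + t • a))
      = fun t : ℝ => edot qp q + t * (edot qp a + edot ap q) + t ^ 2 * edot ap a := by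
  funext t; simp [edot, Prod.smul_def]; ring

lemma hasDerivAt_edot_quadratic (qp q ap a : ℝ × ℝ) :
    HasDerivAt (fun t : ℝ => edot (qp + t • ap) (q + t • a)) (edot qp a + edot ap q) 0 := by
  rw [edot_quadratic]
  have h1 : HasDerivAt (fun t : ℝ => edot qp q + t * (edot qp a + edot ap q))
      (edot qp a + edot ap q) 0 := hasDerivAt_affine _ _ 0
  have h2 : HasDerivAt (fun t : ℝ => t ^ 2 * edot ap a) (2 * 0 ^ 1 * edot ap a) 0 :=
    (hasDerivAt_pow 2 0).mul_const _
  simpa using h1.fun_add h2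

/-- inner t-derivative of the bond-angle term -/
lemma hasDerivAt_angle {α : ℝ} (qp q ap a : ℝ × ℝ) (hqp : 0 < enorm2 qp)
    (hq : 0 < enorm2 q) :
    HasDerivAt (fun t : ℝ => α * (1 - edot (qp + t • ap) (q + t • a) /
        (enorm2 (qp + t • ap) * enorm2 (q + t • a))))
      (angDt α qp q ap a) 0 := by
  have hD := hasDerivAt_edot_quadratic qp q ap a
  have hm := (hasDerivAt_enorm qp ap hqp).fun_mul (hasDerivAt_enorm q a hq)
  have hne : enorm2 (qp + (0:ℝ) • ap) * enorm2 (q + (0:ℝ) • a) ≠ 0 := by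
    simpa using (mul_pos hqp hq).ne'
  have hdiv := hD.fun_div hm hne
  have := (hdiv.const_sub 1).const_mul α
  refine this.congr_deriv ?_
  simp only [angDt, zero_smul, add_zero]
  ring

/-- outer s-derivative of the bond-angle term -/
lemma hasDerivAt_angle_outer {α r : ℝ} (hr : 0 < r) (ap a bp b : ℝ × ℝ) :
    HasDerivAt (fun s : ℝ => angDt α ((r,0) + s • bp) ((r,0) + s • b) ap a)
      (α * ((ap.2 - a.2) * (bp.2 - b.2)) / r ^ 2) 0 := by
  have hp : enorm2 ((r,0) : ℝ × ℝ) = r := enorm2_pair r hr.le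
  have hq : 0 < enorm2 ((r,0) : ℝ × ℝ) := by rw [hp]; exact hr
  have hnp := hasDerivAt_enorm (r,0) bp hq
  have hn := hasDerivAt_enorm (r,0) b hq
  have hnep : enorm2 ((r,0) + (0:ℝ) • bp) ≠ 0 := by simpa using hq.ne'
  have hne : enorm2 ((r,0) + (0:ℝ) • b) ≠ 0 := by simpa using hq.ne'
  have he1 : HasDerivAt (fun s : ℝ => edot ((r,0) + s • bp) a) (edot bp a) 0 := by
    rw [edot_affine]; simpa using hasDerivAt_affine (edot (r,0) a) (edot bp a) 0
  have he2 : HasDerivAt (fun s : ℝ => edot ap ((r,0) + s • b)) (edot b ap) 0 := by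
    have : (fun s : ℝ => edot ap ((r,0) + s • b)) = fun s : ℝ => edot ((r,0) + s • b) ap := by
      funext s; rw [edot_comm]
    rw [this, edot_affine]; simpa using hasDerivAt_affine (edot (r,0) ap) (edot b ap) 0
  have hD : HasDerivAt (fun s : ℝ => edot ((r,0) + s • bp) ((r,0) + s • b))
      (edot (r,0) b + edot bp (r,0)) 0 := hasDerivAt_edot_quadratic (r,0) (r,0) bp b
  have hEp : HasDerivAt (fun s : ℝ => edot ((r,0) + s • bp) ap) (edot bp ap) 0 := by
    rw [edot_affine]; simpa using hasDerivAt_affine (edot (r,0) ap) (edot bp ap) 0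
  have hE : HasDerivAt (fun s : ℝ => edot ((r,0) + s • b) a) (edot b a) 0 := by
    rw [edot_affine]; simpa using hasDerivAt_affine (edot (r,0) a) (edot b a) 0
  have hA := (he1.fun_add he2).fun_mul (hnp.fun_mul hn)
  have hB := hD.fun_mul (((hEp.fun_div hnp hnep).fun_mul hn).fun_add (hnp.fun_mul (hE.fun_div hn hne)))
  have hden := (hnp.fun_mul hn).fun_pow 2
  have hden0 : (enorm2 ((r,0) + (0:ℝ) • bp) * enorm2 ((r,0) + (0:ℝ) • b)) ^ 2 ≠ 0 := by
    simp only [zero_smul, add_zero]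
    positivity
  have hwhole := (((hA.fun_sub hB).fun_div hden hden0).const_mul α).fun_neg
  have hfun : (fun s : ℝ => angDt α ((r,0) + s • bp) ((r,0) + s • b) ap a)
      = fun s : ℝ => -(α * (((edot ((r,0) + s • bp) a + edot ap ((r,0) + s • b)) *
          (enorm2 ((r,0) + s • bp) * enorm2 ((r,0) + s • b))
        - edot ((r,0) + s • bp) ((r,0) + s • b) *
          (edot ((r,0) + s • bp) ap / enorm2 ((r,0) + s • bp) * enorm2 ((r,0) + s • b)
            + enorm2 ((r,0) + s • bp) * (edot ((r,0) + s • b) a / enorm2 ((r,0) + s • b))))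
        / (enorm2 ((r,0) + s • bp) * enorm2 ((r,0) + s • b)) ^ 2)) := by
    funext s; rfl
  rw [hfun]
  refine hwhole.congr_deriv ?_
  simp only [zero_smul, add_zero, hp]
  simp only [edot]
  norm_num
  field_simp
  ring

lemma bd_cfg {ε : ℝ} (hε : ε ≠ 0) (F t s : ℝ) (u v : ℤ → ℝ × ℝ) (ℓ : ℤ) :
    bd ε (fun m => yLin ε F m + t • u m + s • v m) ℓ
      = ((F,0) : ℝ × ℝ) + t • bd ε u ℓ + s • bd ε v ℓ := by
  have h := bd_yLin (F := F) hε ℓ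
  simp only [bd, smul_sub, smul_smul] at *
  rw [← h]
  module

lemma two_smul_pair (F : ℝ) : ((2*F, 0) : ℝ × ℝ) = ((F,0) : ℝ × ℝ) + (F,0) := by
  rw [Prod.mk_add_mk]; norm_num [two_mul]

section inner

variable {N : ℕ} {ε F α : ℝ} {φ : ℝ → ℝ}

lemma inner_Ea (hφ : ContDiffOn ℝ 2 φ (Set.Ioi 0)) (hε : ε ≠ 0)
    (u v : ℤ → ℝ × ℝ) (s : ℝ)
    (h1 : ∀ ℓ ∈ Finset.Icc (1:ℤ) (N:ℤ), 0 < enorm2 (((F,0) : ℝ × ℝ) + s • bd ε v ℓ))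
    (h2 : ∀ ℓ ∈ Finset.Icc (1:ℤ) (N:ℤ),
      0 < enorm2 (((2*F,0) : ℝ × ℝ) + s • (bd ε v (ℓ+1) + bd ε v ℓ))) :
    HasDerivAt (fun t : ℝ => Ea N ε φ (fun m => yLin ε F m + t • u m + s • v m))
      (ε * ∑ ℓ ∈ Finset.Icc (1:ℤ) (N:ℤ),
        (deriv φ (enorm2 (((F,0) : ℝ × ℝ) + s • bd ε v ℓ)) *
          (edot (((F,0) : ℝ × ℝ) + s • bd ε v ℓ) (bd ε u ℓ) /
            enorm2 (((F,0) : ℝ × ℝ) + s • bd ε v ℓ))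
        + deriv φ (enorm2 (((2*F,0) : ℝ × ℝ) + s • (bd ε v (ℓ+1) + bd ε v ℓ))) *
          (edot (((2*F,0) : ℝ × ℝ) + s • (bd ε v (ℓ+1) + bd ε v ℓ))
              (bd ε u (ℓ+1) + bd ε u ℓ) /
            enorm2 (((2*F,0) : ℝ × ℝ) + s • (bd ε v (ℓ+1) + bd ε v ℓ))))) 0 := by
  have hfun : (fun t : ℝ => Ea N ε φ (fun m => yLin ε F m + t • u m + s • v m))
      = fun t : ℝ => ε * ∑ ℓ ∈ Finset.Icc (1:ℤ) (N:ℤ),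
        (φ (enorm2 ((((F,0) : ℝ × ℝ) + s • bd ε v ℓ) + t • bd ε u ℓ))
        + φ (enorm2 ((((2*F,0) : ℝ × ℝ) + s • (bd ε v (ℓ+1) + bd ε v ℓ))
            + t • (bd ε u (ℓ+1) + bd ε u ℓ)))) := by
    funext t
    unfold Ea
    congr 1
    apply Finset.sum_congr rfl
    intro ℓ _
    rw [bd_cfg hε, bd_cfg hε,
      show (((F,0) : ℝ × ℝ) + t • bd ε u (ℓ+1) + s • bd ε v (ℓ+1))
            + (((F,0) : ℝ × ℝ) + t • bd ε u ℓ + s • bd ε v ℓ)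
          = (((2*F,0) : ℝ × ℝ) + s • (bd ε v (ℓ+1) + bd ε v ℓ))
            + t • (bd ε u (ℓ+1) + bd ε u ℓ) by rw [two_smul_pair]; module,
      show ((F,0) : ℝ × ℝ) + t • bd ε u ℓ + s • bd ε v ℓ
          = (((F,0) : ℝ × ℝ) + s • bd ε v ℓ) + t • bd ε u ℓ by module]
  rw [hfun]
  exact (HasDerivAt.fun_sum fun ℓ hℓ =>
    (hasDerivAt_phi_enorm hφ _ _ (h1 ℓ hℓ)).add
      (hasDerivAt_phi_enorm hφ _ _ (h2 ℓ hℓ))).const_mul ε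

lemma inner_ECB (hφ : ContDiffOn ℝ 2 φ (Set.Ioi 0)) (hε : ε ≠ 0)
    (u v : ℤ → ℝ × ℝ) (s : ℝ)
    (h1 : ∀ ℓ ∈ Finset.Icc (1:ℤ) (N:ℤ), 0 < enorm2 (((F,0) : ℝ × ℝ) + s • bd ε v ℓ)) :
    HasDerivAt (fun t : ℝ => ECB N ε φ (fun m => yLin ε F m + t • u m + s • v m))
      (ε * ∑ ℓ ∈ Finset.Icc (1:ℤ) (N:ℤ),
        (deriv φ (enorm2 (((F,0) : ℝ × ℝ) + s • bd ε v ℓ)) *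
          (edot (((F,0) : ℝ × ℝ) + s • bd ε v ℓ) (bd ε u ℓ) /
            enorm2 (((F,0) : ℝ × ℝ) + s • bd ε v ℓ))
        + deriv φ (enorm2 (((2*F,0) : ℝ × ℝ) + s • ((2:ℝ) • bd ε v ℓ))) *
          (edot (((2*F,0) : ℝ × ℝ) + s • ((2:ℝ) • bd ε v ℓ)) ((2:ℝ) • bd ε u ℓ) /
            enorm2 (((2*F,0) : ℝ × ℝ) + s • ((2:ℝ) • bd ε v ℓ))))) 0 := by
  have key : ∀ ℓ ∈ Finset.Icc (1:ℤ) (N:ℤ),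
      (((2*F,0) : ℝ × ℝ) + s • ((2:ℝ) • bd ε v ℓ))
        = (2:ℝ) • (((F,0) : ℝ × ℝ) + s • bd ε v ℓ) := by
    intro ℓ _; rw [two_smul_pair]; module
  have h2 : ∀ ℓ ∈ Finset.Icc (1:ℤ) (N:ℤ),
      0 < enorm2 (((2*F,0) : ℝ × ℝ) + s • ((2:ℝ) • bd ε v ℓ)) := by
    intro ℓ hℓ
    rw [key ℓ hℓ, enorm2_two_smul]
    linarith [h1 ℓ hℓ]
  have hfun : (fun t : ℝ => ECB N ε φ (fun m => yLin ε F m + t • u m + s • v m))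
      = fun t : ℝ => ε * ∑ ℓ ∈ Finset.Icc (1:ℤ) (N:ℤ),
        (φ (enorm2 ((((F,0) : ℝ × ℝ) + s • bd ε v ℓ) + t • bd ε u ℓ))
        + φ (enorm2 ((((2*F,0) : ℝ × ℝ) + s • ((2:ℝ) • bd ε v ℓ))
            + t • ((2:ℝ) • bd ε u ℓ)))) := by
    funext t
    unfold ECB
    congr 1
    apply Finset.sum_congr rfl
    intro ℓ hℓ
    rw [bd_cfg hε, ← enorm2_two_smul,
      show ((F,0) : ℝ × ℝ) + t • bd ε u ℓ + s • bd ε v ℓ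
          = (((F,0) : ℝ × ℝ) + s • bd ε v ℓ) + t • bd ε u ℓ by module,
      show (2:ℝ) • ((((F,0) : ℝ × ℝ) + s • bd ε v ℓ) + t • bd ε u ℓ)
          = (((2*F,0) : ℝ × ℝ) + s • ((2:ℝ) • bd ε v ℓ)) + t • ((2:ℝ) • bd ε u ℓ)
        by rw [two_smul_pair]; module]
  rw [hfun]
  exact (HasDerivAt.fun_sum fun ℓ hℓ =>
    (hasDerivAt_phi_enorm hφ _ _ (h1 ℓ hℓ)).add
      (hasDerivAt_phi_enorm hφ _ _ (h2 ℓ hℓ))).const_mul ε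

lemma inner_Eb (hε : ε ≠ 0) (u v : ℤ → ℝ × ℝ) (s : ℝ)
    (h1 : ∀ ℓ ∈ Finset.Icc (1:ℤ) (N:ℤ), 0 < enorm2 (((F,0) : ℝ × ℝ) + s • bd ε v ℓ))
    (h1' : ∀ ℓ ∈ Finset.Icc (1:ℤ) (N:ℤ), 0 < enorm2 (((F,0) : ℝ × ℝ) + s • bd ε v (ℓ+1))) :
    HasDerivAt (fun t : ℝ => Eb N ε α (fun m => yLin ε F m + t • u m + s • v m))
      (ε * ∑ ℓ ∈ Finset.Icc (1:ℤ) (N:ℤ),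
        angDt α (((F,0) : ℝ × ℝ) + s • bd ε v (ℓ+1)) (((F,0) : ℝ × ℝ) + s • bd ε v ℓ)
          (bd ε u (ℓ+1)) (bd ε u ℓ)) 0 := by
  have hfun : (fun t : ℝ => Eb N ε α (fun m => yLin ε F m + t • u m + s • v m))
      = fun t : ℝ => ε * ∑ ℓ ∈ Finset.Icc (1:ℤ) (N:ℤ),
        α * (1 - edot ((((F,0) : ℝ × ℝ) + s • bd ε v (ℓ+1)) + t • bd ε u (ℓ+1))
            ((((F,0) : ℝ × ℝ) + s • bd ε v ℓ) + t • bd ε u ℓ) /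
          (enorm2 ((((F,0) : ℝ × ℝ) + s • bd ε v (ℓ+1)) + t • bd ε u (ℓ+1)) *
            enorm2 ((((F,0) : ℝ × ℝ) + s • bd ε v ℓ) + t • bd ε u ℓ))) := by
    funext t
    unfold Eb
    congr 1
    apply Finset.sum_congr rfl
    intro ℓ _
    rw [bd_cfg hε, bd_cfg hε,
      show ((F,0) : ℝ × ℝ) + t • bd ε u (ℓ+1) + s • bd ε v (ℓ+1)
          = (((F,0) : ℝ × ℝ) + s • bd ε v (ℓ+1)) + t • bd ε u (ℓ+1) by module,
      show ((F,0) : ℝ × ℝ) + t • bd ε u ℓ + s • bd ε v ℓ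
          = (((F,0) : ℝ × ℝ) + s • bd ε v ℓ) + t • bd ε u ℓ by module]
  rw [hfun]
  exact (HasDerivAt.fun_sum fun ℓ hℓ =>
    hasDerivAt_angle _ _ _ _ (h1' ℓ hℓ) (h1 ℓ hℓ)).const_mul ε

end inner

lemma eventually_pos {c : ℝ} (hc : 0 < c) (w : ℝ × ℝ) :
    ∀ᶠ s : ℝ in nhds 0, 0 < enorm2 (((c,0) : ℝ × ℝ) + s • w) := by
  have hcont : Continuous fun s : ℝ => enorm2 (((c,0) : ℝ × ℝ) + s • w) := by
    unfold enorm2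
    exact Real.continuous_sqrt.comp (by fun_prop)
  have h0 : (0:ℝ) < enorm2 (((c,0) : ℝ × ℝ) + (0:ℝ) • w) := by
    simpa [enorm2_pair c hc.le] using hc
  exact (hcont.continuousAt (x := 0)).eventually (eventually_gt_nhds h0)

lemma angDt_base {α r : ℝ} (hr : 0 < r) (ap a : ℝ × ℝ) :
    angDt α ((r,0) : ℝ × ℝ) ((r,0) : ℝ × ℝ) ap a = 0 := by
  have h := enorm2_pair r hr.le
  unfold angDt
  rw [h]
  have hX : (edot ((r,0) : ℝ × ℝ) a + edot ap ((r,0) : ℝ × ℝ)) * (r * r)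
      - edot ((r,0) : ℝ × ℝ) ((r,0) : ℝ × ℝ) *
        (edot ((r,0) : ℝ × ℝ) ap / r * r + r * (edot ((r,0) : ℝ × ℝ) a / r)) = 0 := by
    simp only [edot]
    field_simp
    ring
  rw [hX, zero_div, mul_zero, neg_zero]

section outer

variable {N : ℕ} {ε F α : ℝ} {φ : ℝ → ℝ}

lemma event_all (hF : 0 < F) (v : ℤ → ℝ × ℝ) :
    ∀ᶠ s : ℝ in nhds 0,
      (∀ ℓ ∈ Finset.Icc (1:ℤ) (N:ℤ), 0 < enorm2 (((F,0) : ℝ × ℝ) + s • bd ε v ℓ))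
      ∧ (∀ ℓ ∈ Finset.Icc (1:ℤ) (N:ℤ), 0 < enorm2 (((F,0) : ℝ × ℝ) + s • bd ε v (ℓ+1)))
      ∧ (∀ ℓ ∈ Finset.Icc (1:ℤ) (N:ℤ),
          0 < enorm2 (((2*F,0) : ℝ × ℝ) + s • (bd ε v (ℓ+1) + bd ε v ℓ))) := by
  have h2F : 0 < 2*F := by linarith
  have A : ∀ (c : ℝ), 0 < c → ∀ (g : ℤ → ℝ × ℝ),
      ∀ᶠ s : ℝ in nhds 0, ∀ ℓ ∈ Finset.Icc (1:ℤ) (N:ℤ),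
        0 < enorm2 (((c,0) : ℝ × ℝ) + s • g ℓ) := by
    intro c hc g
    have := (Filter.eventually_all_finite (Finset.Icc (1:ℤ) (N:ℤ)).finite_toSet
      (p := fun ℓ (s : ℝ) => 0 < enorm2 (((c,0) : ℝ × ℝ) + s • g ℓ)) (l := nhds 0)).2
      (fun ℓ _ => eventually_pos hc (g ℓ))
    exact this.mono (fun s hs ℓ hℓ => hs ℓ (by simpa using hℓ))
  exact ((A F hF (fun ℓ => bd ε v ℓ)).and
    ((A F hF (fun ℓ => bd ε v (ℓ+1))).and
      (A (2*F) h2F (fun ℓ => bd ε v (ℓ+1) + bd ε v ℓ))))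

lemma d2E_ab_eq (hφ : ContDiffOn ℝ 2 φ (Set.Ioi 0)) (hε : ε ≠ 0) (hF : 0 < F)
    (u v : ℤ → ℝ × ℝ) :
    d2E (fun y => Ea N ε φ y + Eb N ε α y) (yLin ε F) u v
      = ε * ∑ ℓ ∈ Finset.Icc (1:ℤ) (N:ℤ),
          (deriv (deriv φ) F * (bd ε u ℓ).1 * (bd ε v ℓ).1
            + deriv φ F * ((bd ε u ℓ).2 * (bd ε v ℓ).2) / F
          + (deriv (deriv φ) (2*F) * (bd ε u (ℓ+1) + bd ε u ℓ).1 *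
              (bd ε v (ℓ+1) + bd ε v ℓ).1
            + deriv φ (2*F) * ((bd ε u (ℓ+1) + bd ε u ℓ).2 *
              (bd ε v (ℓ+1) + bd ε v ℓ).2) / (2*F)))
      + ε * ∑ ℓ ∈ Finset.Icc (1:ℤ) (N:ℤ),
          α * (((bd ε u (ℓ+1)).2 - (bd ε u ℓ).2) * ((bd ε v (ℓ+1)).2 - (bd ε v ℓ).2)) / F ^ 2
      := by
  have h2F : 0 < 2*F := by linarith
  unfold d2E
  have heq : (fun s : ℝ => deriv (fun t : ℝ =>
        (fun y => Ea N ε φ y + Eb N ε α y) (fun ℓ => yLin ε F ℓ + t • u ℓ + s • v ℓ)) 0)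
      =ᶠ[nhds 0] (fun s : ℝ =>
        (ε * ∑ ℓ ∈ Finset.Icc (1:ℤ) (N:ℤ),
          (deriv φ (enorm2 (((F,0) : ℝ × ℝ) + s • bd ε v ℓ)) *
            (edot (((F,0) : ℝ × ℝ) + s • bd ε v ℓ) (bd ε u ℓ) /
              enorm2 (((F,0) : ℝ × ℝ) + s • bd ε v ℓ))
          + deriv φ (enorm2 (((2*F,0) : ℝ × ℝ) + s • (bd ε v (ℓ+1) + bd ε v ℓ))) *
            (edot (((2*F,0) : ℝ × ℝ) + s • (bd ε v (ℓ+1) + bd ε v ℓ))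
                (bd ε u (ℓ+1) + bd ε u ℓ) /
              enorm2 (((2*F,0) : ℝ × ℝ) + s • (bd ε v (ℓ+1) + bd ε v ℓ)))))
        + ε * ∑ ℓ ∈ Finset.Icc (1:ℤ) (N:ℤ),
            angDt α (((F,0) : ℝ × ℝ) + s • bd ε v (ℓ+1)) (((F,0) : ℝ × ℝ) + s • bd ε v ℓ)
              (bd ε u (ℓ+1)) (bd ε u ℓ)) := by
    refine (event_all (N := N) (ε := ε) hF v).mono (fun s hs => ?_)
    exact ((inner_Ea hφ hε u v s hs.1 hs.2.2).add
      (inner_Eb hε u v s hs.1 hs.2.1)).deriv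
  rw [heq.deriv_eq]
  refine HasDerivAt.deriv ?_
  exact ((HasDerivAt.fun_sum fun ℓ _ =>
      (hasDerivAt_phi_outer hφ hF (bd ε u ℓ) (bd ε v ℓ)).add
        (hasDerivAt_phi_outer hφ h2F (bd ε u (ℓ+1) + bd ε u ℓ)
          (bd ε v (ℓ+1) + bd ε v ℓ))).const_mul ε).add
    ((HasDerivAt.fun_sum fun ℓ _ =>
      hasDerivAt_angle_outer hF (bd ε u (ℓ+1)) (bd ε u ℓ)
        (bd ε v (ℓ+1)) (bd ε v ℓ)).const_mul ε)

lemma d2E_CBb_eq (hφ : ContDiffOn ℝ 2 φ (Set.Ioi 0)) (hε : ε ≠ 0) (hF : 0 < F)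
    (u v : ℤ → ℝ × ℝ) :
    d2E (fun y => ECB N ε φ y + Eb N ε α y) (yLin ε F) u v
      = ε * ∑ ℓ ∈ Finset.Icc (1:ℤ) (N:ℤ),
          (deriv (deriv φ) F * (bd ε u ℓ).1 * (bd ε v ℓ).1
            + deriv φ F * ((bd ε u ℓ).2 * (bd ε v ℓ).2) / F
          + (deriv (deriv φ) (2*F) * ((2:ℝ) • bd ε u ℓ).1 * ((2:ℝ) • bd ε v ℓ).1
            + deriv φ (2*F) * (((2:ℝ) • bd ε u ℓ).2 * ((2:ℝ) • bd ε v ℓ).2) / (2*F)))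
      + ε * ∑ ℓ ∈ Finset.Icc (1:ℤ) (N:ℤ),
          α * (((bd ε u (ℓ+1)).2 - (bd ε u ℓ).2) * ((bd ε v (ℓ+1)).2 - (bd ε v ℓ).2)) / F ^ 2
      := by
  have h2F : 0 < 2*F := by linarith
  unfold d2E
  have heq : (fun s : ℝ => deriv (fun t : ℝ =>
        (fun y => ECB N ε φ y + Eb N ε α y) (fun ℓ => yLin ε F ℓ + t • u ℓ + s • v ℓ)) 0)
      =ᶠ[nhds 0] (fun s : ℝ =>
        (ε * ∑ ℓ ∈ Finset.Icc (1:ℤ) (N:ℤ),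
          (deriv φ (enorm2 (((F,0) : ℝ × ℝ) + s • bd ε v ℓ)) *
            (edot (((F,0) : ℝ × ℝ) + s • bd ε v ℓ) (bd ε u ℓ) /
              enorm2 (((F,0) : ℝ × ℝ) + s • bd ε v ℓ))
          + deriv φ (enorm2 (((2*F,0) : ℝ × ℝ) + s • ((2:ℝ) • bd ε v ℓ))) *
            (edot (((2*F,0) : ℝ × ℝ) + s • ((2:ℝ) • bd ε v ℓ)) ((2:ℝ) • bd ε u ℓ) /
              enorm2 (((2*F,0) : ℝ × ℝ) + s • ((2:ℝ) • bd ε v ℓ)))))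
        + ε * ∑ ℓ ∈ Finset.Icc (1:ℤ) (N:ℤ),
            angDt α (((F,0) : ℝ × ℝ) + s • bd ε v (ℓ+1)) (((F,0) : ℝ × ℝ) + s • bd ε v ℓ)
              (bd ε u (ℓ+1)) (bd ε u ℓ)) := by
    refine (event_all (N := N) (ε := ε) hF v).mono (fun s hs => ?_)
    exact ((inner_ECB hφ hε u v s hs.1).add
      (inner_Eb hε u v s hs.1 hs.2.1)).deriv
  rw [heq.deriv_eq]
  refine HasDerivAt.deriv ?_
  exact ((HasDerivAt.fun_sum fun ℓ _ =>
      (hasDerivAt_phi_outer hφ hF (bd ε u ℓ) (bd ε v ℓ)).add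
        (hasDerivAt_phi_outer hφ h2F ((2:ℝ) • bd ε u ℓ) ((2:ℝ) • bd ε v ℓ))).const_mul ε).add
    ((HasDerivAt.fun_sum fun ℓ _ =>
      hasDerivAt_angle_outer hF (bd ε u (ℓ+1)) (bd ε u ℓ)
        (bd ε v (ℓ+1)) (bd ε v ℓ)).const_mul ε)

lemma dE_ab_eq (hφ : ContDiffOn ℝ 2 φ (Set.Ioi 0)) (hε : ε ≠ 0) (hF : 0 < F)
    (v : ℤ → ℝ × ℝ) :
    dE (fun y => Ea N ε φ y + Eb N ε α y) (yLin ε F) v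
      = ε * ∑ ℓ ∈ Finset.Icc (1:ℤ) (N:ℤ),
          (deriv φ F * (bd ε v ℓ).1
            + deriv φ (2*F) * ((bd ε v (ℓ+1)).1 + (bd ε v ℓ).1)) := by
  have h2F : 0 < 2*F := by linarith
  unfold dE
  have hfun : (fun t : ℝ =>
        (fun y => Ea N ε φ y + Eb N ε α y) (fun ℓ => yLin ε F ℓ + t • v ℓ))
      = (fun t : ℝ =>
        (fun y => Ea N ε φ y + Eb N ε α y) (fun ℓ => yLin ε F ℓ + t • v ℓ + (0:ℝ) • v ℓ)) := by
    funext t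
    simp only [zero_smul, add_zero]
  rw [hfun]
  have h1 : ∀ ℓ ∈ Finset.Icc (1:ℤ) (N:ℤ),
      0 < enorm2 (((F,0) : ℝ × ℝ) + (0:ℝ) • bd ε v ℓ) := by
    intro ℓ _; simpa [enorm2_pair F hF.le] using hF
  have h1' : ∀ ℓ ∈ Finset.Icc (1:ℤ) (N:ℤ),
      0 < enorm2 (((F,0) : ℝ × ℝ) + (0:ℝ) • bd ε v (ℓ+1)) := by
    intro ℓ _; simpa [enorm2_pair F hF.le] using hF
  have h2 : ∀ ℓ ∈ Finset.Icc (1:ℤ) (N:ℤ),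
      0 < enorm2 (((2*F,0) : ℝ × ℝ) + (0:ℝ) • (bd ε v (ℓ+1) + bd ε v ℓ)) := by
    intro ℓ _; simpa [enorm2_pair (2*F) h2F.le] using h2F
  rw [((inner_Ea hφ hε v v 0 h1 h2).fun_add (inner_Eb hε v v 0 h1 h1')).deriv]
  have hang : ∀ ℓ ∈ Finset.Icc (1:ℤ) (N:ℤ),
      angDt α (((F,0) : ℝ × ℝ) + (0:ℝ) • bd ε v (ℓ+1)) (((F,0) : ℝ × ℝ) + (0:ℝ) • bd ε v ℓ)
        (bd ε v (ℓ+1)) (bd ε v ℓ) = 0 := by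
    intro ℓ _
    rw [show ((F,0) : ℝ × ℝ) + (0:ℝ) • bd ε v (ℓ+1) = ((F,0) : ℝ × ℝ) by simp,
      show ((F,0) : ℝ × ℝ) + (0:ℝ) • bd ε v ℓ = ((F,0) : ℝ × ℝ) by simp]
    exact angDt_base hF _ _
  rw [Finset.sum_congr rfl hang]
  simp only [Finset.sum_const_zero, mul_zero, add_zero]
  congr 1
  apply Finset.sum_congr rfl
  intro ℓ _
  rw [show ((F,0) : ℝ × ℝ) + (0:ℝ) • bd ε v ℓ = ((F,0) : ℝ × ℝ) by simp,
    show ((2*F,0) : ℝ × ℝ) + (0:ℝ) • (bd ε v (ℓ+1) + bd ε v ℓ) = ((2*F,0) : ℝ × ℝ) by simp,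
    enorm2_pair F hF.le, enorm2_pair (2*F) h2F.le]
  simp only [edot, Prod.fst_add]
  norm_num
  try field_simp
  try ring

lemma dE_CBb_eq (hφ : ContDiffOn ℝ 2 φ (Set.Ioi 0)) (hε : ε ≠ 0) (hF : 0 < F)
    (v : ℤ → ℝ × ℝ) :
    dE (fun y => ECB N ε φ y + Eb N ε α y) (yLin ε F) v
      = ε * ∑ ℓ ∈ Finset.Icc (1:ℤ) (N:ℤ),
          (deriv φ F * (bd ε v ℓ).1 + deriv φ (2*F) * (2 * (bd ε v ℓ).1)) := by
  have h2F : 0 < 2*F := by linarith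
  unfold dE
  have hfun : (fun t : ℝ =>
        (fun y => ECB N ε φ y + Eb N ε α y) (fun ℓ => yLin ε F ℓ + t • v ℓ))
      = (fun t : ℝ =>
        (fun y => ECB N ε φ y + Eb N ε α y) (fun ℓ => yLin ε F ℓ + t • v ℓ + (0:ℝ) • v ℓ)) := by
    funext t
    simp only [zero_smul, add_zero]
  rw [hfun]
  have h1 : ∀ ℓ ∈ Finset.Icc (1:ℤ) (N:ℤ),
      0 < enorm2 (((F,0) : ℝ × ℝ) + (0:ℝ) • bd ε v ℓ) := by
    intro ℓ _; simpa [enorm2_pair F hF.le] using hF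
  have h1' : ∀ ℓ ∈ Finset.Icc (1:ℤ) (N:ℤ),
      0 < enorm2 (((F,0) : ℝ × ℝ) + (0:ℝ) • bd ε v (ℓ+1)) := by
    intro ℓ _; simpa [enorm2_pair F hF.le] using hF
  rw [((inner_ECB hφ hε v v 0 h1).fun_add (inner_Eb hε v v 0 h1 h1')).deriv]
  have hang : ∀ ℓ ∈ Finset.Icc (1:ℤ) (N:ℤ),
      angDt α (((F,0) : ℝ × ℝ) + (0:ℝ) • bd ε v (ℓ+1)) (((F,0) : ℝ × ℝ) + (0:ℝ) • bd ε v ℓ)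
        (bd ε v (ℓ+1)) (bd ε v ℓ) = 0 := by
    intro ℓ _
    rw [show ((F,0) : ℝ × ℝ) + (0:ℝ) • bd ε v (ℓ+1) = ((F,0) : ℝ × ℝ) by simp,
      show ((F,0) : ℝ × ℝ) + (0:ℝ) • bd ε v ℓ = ((F,0) : ℝ × ℝ) by simp]
    exact angDt_base hF _ _
  rw [Finset.sum_congr rfl hang]
  simp only [Finset.sum_const_zero, mul_zero, add_zero]
  congr 1
  apply Finset.sum_congr rfl
  intro ℓ _
  rw [show ((2*F,0) : ℝ × ℝ) + (0:ℝ) • ((2:ℝ) • bd ε v ℓ) = ((2*F,0) : ℝ × ℝ) by simp,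
    show ((F,0) : ℝ × ℝ) + (0:ℝ) • bd ε v ℓ = ((F,0) : ℝ × ℝ) by simp,
    enorm2_pair F hF.le, enorm2_pair (2*F) h2F.le]
  simp only [edot, Prod.smul_def, smul_eq_mul]
  norm_num
  try field_simp
  try ring


end outer

section sums
variable {N : ℕ}

lemma sum_shift_back {N : ℕ} (hN : 1 ≤ N) {c : ℤ → ℝ} (hc : ∀ ℓ : ℤ, c (ℓ + (N:ℤ)) = c ℓ) :
    ∑ ℓ ∈ Finset.Icc (1:ℤ) (N:ℤ), c (ℓ - 1) = ∑ ℓ ∈ Finset.Icc (1:ℤ) (N:ℤ), c ℓ := by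
  have h := sum_shift hN (g := fun ℓ => c (ℓ - 1)) (by intro ℓ; rw [show ℓ + (N:ℤ) - 1 = (ℓ-1) + (N:ℤ) by ring, hc])
  simp only [add_sub_cancel_right] at h
  exact h.symm

lemma sum_id1 (hN : 1 ≤ N) (x y : ℤ → ℝ) (hx : ∀ ℓ : ℤ, x (ℓ + (N:ℤ)) = x ℓ)
    (hy : ∀ ℓ : ℤ, y (ℓ + (N:ℤ)) = y ℓ) :
    ∑ ℓ ∈ Finset.Icc (1:ℤ) (N:ℤ), ((x (ℓ+1) + x ℓ) * (y (ℓ+1) + y ℓ))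
      + ∑ ℓ ∈ Finset.Icc (1:ℤ) (N:ℤ), ((x (ℓ+1) - x ℓ) * (y (ℓ+1) - y ℓ))
      = 4 * ∑ ℓ ∈ Finset.Icc (1:ℤ) (N:ℤ), x ℓ * y ℓ := by
  have h1 : ∑ ℓ ∈ Finset.Icc (1:ℤ) (N:ℤ), x (ℓ+1) * y (ℓ+1)
      = ∑ ℓ ∈ Finset.Icc (1:ℤ) (N:ℤ), x ℓ * y ℓ :=
    sum_shift hN (g := fun ℓ => x ℓ * y ℓ) (by intro ℓ; rw [hx, hy])
  rw [← Finset.sum_add_distrib]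
  have h2 : ∀ ℓ ∈ Finset.Icc (1:ℤ) (N:ℤ),
      (x (ℓ+1) + x ℓ) * (y (ℓ+1) + y ℓ) + (x (ℓ+1) - x ℓ) * (y (ℓ+1) - y ℓ)
        = 2 * (x (ℓ+1) * y (ℓ+1)) + 2 * (x ℓ * y ℓ) := by
    intro ℓ _; ring
  rw [Finset.sum_congr rfl h2, Finset.sum_add_distrib, ← Finset.mul_sum, ← Finset.mul_sum, h1]
  ring

lemma sum_parts (hN : 1 ≤ N) (X y : ℤ → ℝ) (hX : ∀ ℓ : ℤ, X (ℓ + (N:ℤ)) = X ℓ)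
    (hy : ∀ ℓ : ℤ, y (ℓ + (N:ℤ)) = y ℓ) :
    ∑ ℓ ∈ Finset.Icc (1:ℤ) (N:ℤ), X ℓ * (y ℓ - y (ℓ-1))
      = - ∑ ℓ ∈ Finset.Icc (1:ℤ) (N:ℤ), (X (ℓ+1) - X ℓ) * y ℓ := by
  have h1 : ∑ ℓ ∈ Finset.Icc (1:ℤ) (N:ℤ), X ℓ * y (ℓ-1)
      = ∑ ℓ ∈ Finset.Icc (1:ℤ) (N:ℤ), X (ℓ+1) * y ℓ := by
    have h := sum_shift_back hN (c := fun ℓ => X (ℓ+1) * y ℓ)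
      (by intro ℓ; rw [show ℓ + (N:ℤ) + 1 = (ℓ+1) + (N:ℤ) by ring, hX, hy])
    simp only [sub_add_cancel] at h
    exact h
  have h2 : ∀ ℓ ∈ Finset.Icc (1:ℤ) (N:ℤ),
      X ℓ * (y ℓ - y (ℓ-1)) = X ℓ * y ℓ - X ℓ * y (ℓ-1) := by intro ℓ _; ring
  rw [Finset.sum_congr rfl h2, Finset.sum_sub_distrib, h1, ← Finset.sum_neg_distrib]
  rw [← Finset.sum_sub_distrib]
  apply Finset.sum_congr rfl
  intro ℓ _; ring

end sums

lemma bd_diff {ε : ℝ} (hε : ε ≠ 0) (g : ℤ → ℝ × ℝ) (ℓ : ℤ) :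
    g (ℓ+1) - g ℓ = ε • bd ε g (ℓ+1) := by
  rw [bd, show ℓ + 1 - 1 = ℓ by ring, smul_smul, mul_inv_cancel₀ hε, one_smul]

lemma bd_diff_fst {ε : ℝ} (hε : ε ≠ 0) (g : ℤ → ℝ × ℝ) (ℓ : ℤ) :
    (g (ℓ+1)).1 - (g ℓ).1 = ε * (bd ε g (ℓ+1)).1 := by
  have h := congrArg Prod.fst (bd_diff hε g ℓ)
  simpa using h

lemma bd_diff_snd {ε : ℝ} (hε : ε ≠ 0) (g : ℤ → ℝ × ℝ) (ℓ : ℤ) :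
    (g (ℓ+1)).2 - (g ℓ).2 = ε * (bd ε g (ℓ+1)).2 := by
  have h := congrArg Prod.snd (bd_diff hε g ℓ)
  simpa using h

lemma bd_back_fst {ε : ℝ} (hε : ε ≠ 0) (g : ℤ → ℝ × ℝ) (ℓ : ℤ) :
    (g ℓ).1 - (g (ℓ-1)).1 = ε * (bd ε g ℓ).1 := by
  have h := bd_diff_fst hε g (ℓ-1)
  simpa using h

lemma bd_back_snd {ε : ℝ} (hε : ε ≠ 0) (g : ℤ → ℝ × ℝ) (ℓ : ℤ) :
    (g ℓ).2 - (g (ℓ-1)).2 = ε * (bd ε g ℓ).2 := by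
  have h := bd_diff_snd hε g (ℓ-1)
  simpa using h

/-- The key consistency summation identity, first components. -/
lemma consistency_sum_fst {N : ℕ} (hN : 1 ≤ N) {ε : ℝ} (hε : ε ≠ 0) (u w : ℤ → ℝ × ℝ)
    (hu : ∀ ℓ : ℤ, u (ℓ + (N:ℤ)) = u ℓ) (hw : ∀ ℓ : ℤ, w (ℓ + (N:ℤ)) = w ℓ) :
    ∑ ℓ ∈ Finset.Icc (1:ℤ) (N:ℤ),
        (4 * (bd ε u ℓ).1 * (bd ε w ℓ).1
          - ((bd ε u (ℓ+1)).1 + (bd ε u ℓ).1) * ((bd ε w (ℓ+1)).1 + (bd ε w ℓ).1))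
      = - ε^2 * ∑ ℓ ∈ Finset.Icc (1:ℤ) (N:ℤ),
          (bd ε (bd ε (bd ε u)) (ℓ+1)).1 * (bd ε w ℓ).1 := by
  set x : ℤ → ℝ := fun ℓ => (bd ε u ℓ).1 with hxdef
  set y : ℤ → ℝ := fun ℓ => (bd ε w ℓ).1 with hydef
  set X : ℤ → ℝ := fun ℓ => (bd ε (bd ε u) ℓ).1 with hXdef
  set Z : ℤ → ℝ := fun ℓ => (bd ε (bd ε (bd ε u)) ℓ).1 with hZdef
  have hxp : ∀ ℓ : ℤ, x (ℓ + (N:ℤ)) = x ℓ := fun ℓ => by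
    simp only [hxdef]; rw [bd_periodic hu ε ℓ]
  have hyp : ∀ ℓ : ℤ, y (ℓ + (N:ℤ)) = y ℓ := fun ℓ => by
    simp only [hydef]; rw [bd_periodic hw ε ℓ]
  have hXp : ∀ ℓ : ℤ, X (ℓ + (N:ℤ)) = X ℓ := fun ℓ => by
    simp only [hXdef]; rw [bd_periodic (bd_periodic hu ε) ε ℓ]
  have hZp : ∀ ℓ : ℤ, Z (ℓ + (N:ℤ)) = Z ℓ := fun ℓ => by
    simp only [hZdef]; rw [bd_periodic (bd_periodic (bd_periodic hu ε) ε) ε ℓ]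
  -- step 1: 4xy - (x+ + x)(y+ + y) sums to minus sum of diffs
  have h1 : ∑ ℓ ∈ Finset.Icc (1:ℤ) (N:ℤ),
      (4 * x ℓ * y ℓ - (x (ℓ+1) + x ℓ) * (y (ℓ+1) + y ℓ))
      = ∑ ℓ ∈ Finset.Icc (1:ℤ) (N:ℤ), ((x (ℓ+1) - x ℓ) * (y (ℓ+1) - y ℓ)) := by
    have h := sum_id1 hN x y hxp hyp
    rw [Finset.sum_sub_distrib]
    have e4 : ∑ ℓ ∈ Finset.Icc (1:ℤ) (N:ℤ), 4 * x ℓ * y ℓ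
        = 4 * ∑ ℓ ∈ Finset.Icc (1:ℤ) (N:ℤ), x ℓ * y ℓ := by
      rw [Finset.mul_sum]; exact Finset.sum_congr rfl (fun ℓ _ => by ring)
    rw [e4]; linarith [h]
  -- step 2: diffs are eps * second differences
  have h2 : ∑ ℓ ∈ Finset.Icc (1:ℤ) (N:ℤ), ((x (ℓ+1) - x ℓ) * (y (ℓ+1) - y ℓ))
      = ε^2 * ∑ ℓ ∈ Finset.Icc (1:ℤ) (N:ℤ), (X (ℓ+1) * (bd ε (bd ε w) (ℓ+1)).1) := by
    rw [Finset.mul_sum]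
    apply Finset.sum_congr rfl
    intro ℓ _
    rw [show x (ℓ+1) - x ℓ = ε * X (ℓ+1) from bd_diff_fst hε (bd ε u) ℓ,
      show y (ℓ+1) - y ℓ = ε * (bd ε (bd ε w) (ℓ+1)).1 from bd_diff_fst hε (bd ε w) ℓ]
    ring
  -- step 3: shift
  have h3 : ∑ ℓ ∈ Finset.Icc (1:ℤ) (N:ℤ), (X (ℓ+1) * (bd ε (bd ε w) (ℓ+1)).1)
      = ∑ ℓ ∈ Finset.Icc (1:ℤ) (N:ℤ), (X ℓ * (bd ε (bd ε w) ℓ).1) := by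
    apply sum_shift hN (g := fun ℓ => X ℓ * (bd ε (bd ε w) ℓ).1)
    intro ℓ
    show X (ℓ + (N:ℤ)) * (bd ε (bd ε w) (ℓ + (N:ℤ))).1 = X ℓ * (bd ε (bd ε w) ℓ).1
    rw [hXp, bd_periodic (bd_periodic hw ε) ε ℓ]
  -- step 4: summation by parts
  have h4 : ∑ ℓ ∈ Finset.Icc (1:ℤ) (N:ℤ), (X ℓ * (bd ε (bd ε w) ℓ).1)
      = - ε⁻¹ * ∑ ℓ ∈ Finset.Icc (1:ℤ) (N:ℤ), (ε * Z (ℓ+1)) * y ℓ := by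
    have hq : ∀ ℓ ∈ Finset.Icc (1:ℤ) (N:ℤ),
        X ℓ * (bd ε (bd ε w) ℓ).1 = ε⁻¹ * (X ℓ * (y ℓ - y (ℓ-1))) := by
      intro ℓ _
      rw [show y ℓ - y (ℓ-1) = ε * (bd ε (bd ε w) ℓ).1 from bd_back_fst hε (bd ε w) ℓ]
      field_simp
    rw [Finset.sum_congr rfl hq, ← Finset.mul_sum,
      sum_parts hN X y hXp hyp]
    have hq2 : ∀ ℓ ∈ Finset.Icc (1:ℤ) (N:ℤ),
        (X (ℓ+1) - X ℓ) * y ℓ = (ε * Z (ℓ+1)) * y ℓ := by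
      intro ℓ _
      rw [show X (ℓ+1) - X ℓ = ε * Z (ℓ+1) from bd_diff_fst hε (bd ε (bd ε u)) ℓ]
    rw [Finset.sum_congr rfl hq2]
    ring
  rw [h1, h2, h3, h4]
  have hfold : ∑ ℓ ∈ Finset.Icc (1:ℤ) (N:ℤ), (bd ε (bd ε (bd ε u)) (ℓ+1)).1 * (bd ε w ℓ).1
      = ∑ ℓ ∈ Finset.Icc (1:ℤ) (N:ℤ), Z (ℓ+1) * y ℓ := rfl
  rw [hfold]
  have hpull : ∑ ℓ ∈ Finset.Icc (1:ℤ) (N:ℤ), (ε * Z (ℓ+1)) * y ℓ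
      = ε * ∑ ℓ ∈ Finset.Icc (1:ℤ) (N:ℤ), Z (ℓ+1) * y ℓ := by
    rw [Finset.mul_sum]; exact Finset.sum_congr rfl (fun ℓ _ => by ring)
  rw [hpull]
  field_simp

/-- The key consistency summation identity, second components. -/
lemma consistency_sum_snd {N : ℕ} (hN : 1 ≤ N) {ε : ℝ} (hε : ε ≠ 0) (u w : ℤ → ℝ × ℝ)
    (hu : ∀ ℓ : ℤ, u (ℓ + (N:ℤ)) = u ℓ) (hw : ∀ ℓ : ℤ, w (ℓ + (N:ℤ)) = w ℓ) :
    ∑ ℓ ∈ Finset.Icc (1:ℤ) (N:ℤ),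
        (4 * (bd ε u ℓ).2 * (bd ε w ℓ).2
          - ((bd ε u (ℓ+1)).2 + (bd ε u ℓ).2) * ((bd ε w (ℓ+1)).2 + (bd ε w ℓ).2))
      = - ε^2 * ∑ ℓ ∈ Finset.Icc (1:ℤ) (N:ℤ),
          (bd ε (bd ε (bd ε u)) (ℓ+1)).2 * (bd ε w ℓ).2 := by
  set x : ℤ → ℝ := fun ℓ => (bd ε u ℓ).2 with hxdef
  set y : ℤ → ℝ := fun ℓ => (bd ε w ℓ).2 with hydef
  set X : ℤ → ℝ := fun ℓ => (bd ε (bd ε u) ℓ).2 with hXdef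
  set Z : ℤ → ℝ := fun ℓ => (bd ε (bd ε (bd ε u)) ℓ).2 with hZdef
  have hxp : ∀ ℓ : ℤ, x (ℓ + (N:ℤ)) = x ℓ := fun ℓ => by
    simp only [hxdef]; rw [bd_periodic hu ε ℓ]
  have hyp : ∀ ℓ : ℤ, y (ℓ + (N:ℤ)) = y ℓ := fun ℓ => by
    simp only [hydef]; rw [bd_periodic hw ε ℓ]
  have hXp : ∀ ℓ : ℤ, X (ℓ + (N:ℤ)) = X ℓ := fun ℓ => by
    simp only [hXdef]; rw [bd_periodic (bd_periodic hu ε) ε ℓ]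
  have hZp : ∀ ℓ : ℤ, Z (ℓ + (N:ℤ)) = Z ℓ := fun ℓ => by
    simp only [hZdef]; rw [bd_periodic (bd_periodic (bd_periodic hu ε) ε) ε ℓ]
  -- step 1: 4xy - (x+ + x)(y+ + y) sums to minus sum of diffs
  have h1 : ∑ ℓ ∈ Finset.Icc (1:ℤ) (N:ℤ),
      (4 * x ℓ * y ℓ - (x (ℓ+1) + x ℓ) * (y (ℓ+1) + y ℓ))
      = ∑ ℓ ∈ Finset.Icc (1:ℤ) (N:ℤ), ((x (ℓ+1) - x ℓ) * (y (ℓ+1) - y ℓ)) := by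
    have h := sum_id1 hN x y hxp hyp
    rw [Finset.sum_sub_distrib]
    have e4 : ∑ ℓ ∈ Finset.Icc (1:ℤ) (N:ℤ), 4 * x ℓ * y ℓ
        = 4 * ∑ ℓ ∈ Finset.Icc (1:ℤ) (N:ℤ), x ℓ * y ℓ := by
      rw [Finset.mul_sum]; exact Finset.sum_congr rfl (fun ℓ _ => by ring)
    rw [e4]; linarith [h]
  -- step 2: diffs are eps * second differences
  have h2 : ∑ ℓ ∈ Finset.Icc (1:ℤ) (N:ℤ), ((x (ℓ+1) - x ℓ) * (y (ℓ+1) - y ℓ))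
      = ε^2 * ∑ ℓ ∈ Finset.Icc (1:ℤ) (N:ℤ), (X (ℓ+1) * (bd ε (bd ε w) (ℓ+1)).2) := by
    rw [Finset.mul_sum]
    apply Finset.sum_congr rfl
    intro ℓ _
    rw [show x (ℓ+1) - x ℓ = ε * X (ℓ+1) from bd_diff_snd hε (bd ε u) ℓ,
      show y (ℓ+1) - y ℓ = ε * (bd ε (bd ε w) (ℓ+1)).2 from bd_diff_snd hε (bd ε w) ℓ]
    ring
  -- step 3: shift
  have h3 : ∑ ℓ ∈ Finset.Icc (1:ℤ) (N:ℤ), (X (ℓ+1) * (bd ε (bd ε w) (ℓ+1)).2)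
      = ∑ ℓ ∈ Finset.Icc (1:ℤ) (N:ℤ), (X ℓ * (bd ε (bd ε w) ℓ).2) := by
    apply sum_shift hN (g := fun ℓ => X ℓ * (bd ε (bd ε w) ℓ).2)
    intro ℓ
    show X (ℓ + (N:ℤ)) * (bd ε (bd ε w) (ℓ + (N:ℤ))).2 = X ℓ * (bd ε (bd ε w) ℓ).2
    rw [hXp, bd_periodic (bd_periodic hw ε) ε ℓ]
  -- step 4: summation by parts
  have h4 : ∑ ℓ ∈ Finset.Icc (1:ℤ) (N:ℤ), (X ℓ * (bd ε (bd ε w) ℓ).2)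
      = - ε⁻¹ * ∑ ℓ ∈ Finset.Icc (1:ℤ) (N:ℤ), (ε * Z (ℓ+1)) * y ℓ := by
    have hq : ∀ ℓ ∈ Finset.Icc (1:ℤ) (N:ℤ),
        X ℓ * (bd ε (bd ε w) ℓ).2 = ε⁻¹ * (X ℓ * (y ℓ - y (ℓ-1))) := by
      intro ℓ _
      rw [show y ℓ - y (ℓ-1) = ε * (bd ε (bd ε w) ℓ).2 from bd_back_snd hε (bd ε w) ℓ]
      field_simp
    rw [Finset.sum_congr rfl hq, ← Finset.mul_sum,
      sum_parts hN X y hXp hyp]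
    have hq2 : ∀ ℓ ∈ Finset.Icc (1:ℤ) (N:ℤ),
        (X (ℓ+1) - X ℓ) * y ℓ = (ε * Z (ℓ+1)) * y ℓ := by
      intro ℓ _
      rw [show X (ℓ+1) - X ℓ = ε * Z (ℓ+1) from bd_diff_snd hε (bd ε (bd ε u)) ℓ]
    rw [Finset.sum_congr rfl hq2]
    ring
  rw [h1, h2, h3, h4]
  have hfold : ∑ ℓ ∈ Finset.Icc (1:ℤ) (N:ℤ), (bd ε (bd ε (bd ε u)) (ℓ+1)).2 * (bd ε w ℓ).2
      = ∑ ℓ ∈ Finset.Icc (1:ℤ) (N:ℤ), Z (ℓ+1) * y ℓ := rfl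
  rw [hfold]
  have hpull : ∑ ℓ ∈ Finset.Icc (1:ℤ) (N:ℤ), (ε * Z (ℓ+1)) * y ℓ
      = ε * ∑ ℓ ∈ Finset.Icc (1:ℤ) (N:ℤ), Z (ℓ+1) * y ℓ := by
    rw [Finset.mul_sum]; exact Finset.sum_congr rfl (fun ℓ _ => by ring)
  rw [hpull]
  field_simp

lemma abs_fst_le (v : ℝ × ℝ) : |v.1| ≤ enorm2 v := by
  rw [← Real.sqrt_sq_eq_abs]
  exact Real.sqrt_le_sqrt (by nlinarith [sq_nonneg v.2])

lemma pt_bound (c1 c2 : ℝ) (Z b : ℝ × ℝ) :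
    |c1 * Z.1 * b.1 + c2 * Z.2 * b.2| ≤ max |c1| |c2| * (enorm2 Z * enorm2 b) := by
  have h1 : |c1| ≤ max |c1| |c2| := le_max_left _ _
  have h2 : |c2| ≤ max |c1| |c2| := le_max_right _ _
  have hZ := enorm2_sq Z
  have hb := enorm2_sq b
  have hZ0 := enorm2_nonneg Z
  have hb0 := enorm2_nonneg b
  have key : |Z.1| * |b.1| + |Z.2| * |b.2| ≤ enorm2 Z * enorm2 b := by
    nlinarith [sq_nonneg (|Z.1| * |b.2| - |Z.2| * |b.1|), sq_abs Z.1, sq_abs Z.2,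
      sq_abs b.1, sq_abs b.2, mul_nonneg hZ0 hb0, abs_nonneg Z.1, abs_nonneg Z.2,
      abs_nonneg b.1, abs_nonneg b.2,
      mul_nonneg (mul_nonneg (abs_nonneg Z.1) (abs_nonneg b.1)) (mul_nonneg (abs_nonneg Z.2) (abs_nonneg b.2))]
  calc |c1 * Z.1 * b.1 + c2 * Z.2 * b.2|
      ≤ |c1 * Z.1 * b.1| + |c2 * Z.2 * b.2| := abs_add_le _ _
    _ = |c1| * (|Z.1| * |b.1|) + |c2| * (|Z.2| * |b.2|) := by
        rw [abs_mul, abs_mul, abs_mul, abs_mul]; ring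
    _ ≤ max |c1| |c2| * (|Z.1| * |b.1|) + max |c1| |c2| * (|Z.2| * |b.2|) := by
        gcongr <;> positivity
    _ = max |c1| |c2| * (|Z.1| * |b.1| + |Z.2| * |b.2|) := by ring
    _ ≤ max |c1| |c2| * (enorm2 Z * enorm2 b) := by
        apply mul_le_mul_of_nonneg_left key (le_trans (abs_nonneg c1) h1)

lemma sum_CS (L : Finset ℤ) (f g : ℤ → ℝ) :
    ∑ ℓ ∈ L, f ℓ * g ℓ ≤ Real.sqrt (∑ ℓ ∈ L, (f ℓ)^2) * Real.sqrt (∑ ℓ ∈ L, (g ℓ)^2) := by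
  have h := Finset.sum_mul_sq_le_sq_mul_sq L f g
  calc ∑ ℓ ∈ L, f ℓ * g ℓ ≤ |∑ ℓ ∈ L, f ℓ * g ℓ| := le_abs_self _
    _ = Real.sqrt ((∑ ℓ ∈ L, f ℓ * g ℓ)^2) := (Real.sqrt_sq_eq_abs _).symm
    _ ≤ Real.sqrt ((∑ ℓ ∈ L, (f ℓ)^2) * ∑ ℓ ∈ L, (g ℓ)^2) := Real.sqrt_le_sqrt h
    _ = _ := Real.sqrt_mul (by positivity) _

lemma sum_linear_comb (L : Finset ℤ) (ε : ℝ) (f g h f' g' h' : ℤ → ℝ)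
    (hfg : ∀ ℓ ∈ L, f ℓ - g ℓ = h ℓ) (hfg' : ∀ ℓ ∈ L, f' ℓ - g' ℓ = h' ℓ) :
    (ε * ∑ ℓ ∈ L, f ℓ + ε * ∑ ℓ ∈ L, f' ℓ) - (ε * ∑ ℓ ∈ L, g ℓ + ε * ∑ ℓ ∈ L, g' ℓ)
      = ε * ∑ ℓ ∈ L, h ℓ + ε * ∑ ℓ ∈ L, h' ℓ := by
  have e1 : ∑ ℓ ∈ L, h ℓ = ∑ ℓ ∈ L, f ℓ - ∑ ℓ ∈ L, g ℓ := by
    rw [← Finset.sum_sub_distrib]; exact (Finset.sum_congr rfl hfg).symm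
  have e2 : ∑ ℓ ∈ L, h' ℓ = ∑ ℓ ∈ L, f' ℓ - ∑ ℓ ∈ L, g' ℓ := by
    rw [← Finset.sum_sub_distrib]; exact (Finset.sum_congr rfl hfg').symm
  rw [e1, e2]; ring

lemma sum_cancel_comb (L : Finset ℤ) (ε : ℝ) (f g G h : ℤ → ℝ)
    (hfg : ∀ ℓ ∈ L, f ℓ - g ℓ = h ℓ) :
    (ε * ∑ ℓ ∈ L, f ℓ + ε * ∑ ℓ ∈ L, G ℓ) - (ε * ∑ ℓ ∈ L, g ℓ + ε * ∑ ℓ ∈ L, G ℓ)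
      = ε * ∑ ℓ ∈ L, h ℓ := by
  have e1 : ∑ ℓ ∈ L, h ℓ = ∑ ℓ ∈ L, f ℓ - ∑ ℓ ∈ L, g ℓ := by
    rw [← Finset.sum_sub_distrib]; exact (Finset.sum_congr rfl hfg).symm
  rw [e1]; ring



set_option maxHeartbeats 2000000 in
theorem stmt_14 (N : ℕ) (hN : 4 ≤ N) (ε : ℝ) (hε : ε = (N : ℝ)⁻¹)
    (φ : ℝ → ℝ) (hφ : ContDiffOn ℝ 2 φ (Set.Ioi 0)) (F : ℝ) (hF : 0 < F)
    (α : ℝ) (hα : 0 < α)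
    (hγ : 0 < min (deriv (deriv φ) F + 4 * deriv (deriv φ) (2 * F))
      ((deriv φ F + 2 * deriv φ (2 * F)) / F))
    (f uab uCBb : ℤ → ℝ × ℝ) (hf : IsDisp N f) (huab : IsDisp N uab)
    (huCBb : IsDisp N uCBb)
    (heqa : ∀ v : ℤ → ℝ × ℝ, IsDisp N v →
      dE (fun y => Ea N ε φ y + Eb N ε α y) (yLin ε F) v
        + d2E (fun y => Ea N ε φ y + Eb N ε α y) (yLin ε F) uab v = ip N ε f v)
    (heqCB : ∀ v : ℤ → ℝ × ℝ, IsDisp N v →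
      dE (fun y => ECB N ε φ y + Eb N ε α y) (yLin ε F) v
        + d2E (fun y => ECB N ε φ y + Eb N ε α y) (yLin ε F) uCBb v = ip N ε f v) :
    nrm N ε (bd ε (fun ℓ => uab ℓ - uCBb ℓ)) ≤
      ε ^ 2 * max |deriv (deriv φ) (2 * F)| |deriv φ (2 * F) / (2 * F)| /
        min (deriv (deriv φ) F + 4 * deriv (deriv φ) (2 * F))
          ((deriv φ F + 2 * deriv φ (2 * F)) / F) *
        nrm N ε (bd ε (bd ε (bd ε uab))) := by
  have hN1 : 1 ≤ N := by omega
  have hNR : (0:ℝ) < (N:ℝ) := by exact_mod_cast Nat.lt_of_lt_of_le (by norm_num) hN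
  have hε0 : 0 < ε := by rw [hε]; positivity
  have hεne : ε ≠ 0 := hε0.ne'
  have h2F : 0 < 2*F := by linarith
  set A1 := deriv (deriv φ) F with hA1
  set A2 := deriv φ F with hA2
  set B1 := deriv (deriv φ) (2*F) with hB1
  set B2 := deriv φ (2*F) with hB2
  set γ := min (A1 + 4 * B1) ((A2 + 2 * B2) / F) with hγdef
  set M := max |B1| |B2 / (2*F)| with hMdef
  set w := fun ℓ : ℤ => uab ℓ - uCBb ℓ with hwdef
  have hwD : IsDisp N w := by
    constructor
    · intro ℓ; simp only [hwdef, huab.1 ℓ, huCBb.1 ℓ]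
    · simp only [hwdef]
      rw [Finset.sum_sub_distrib, huab.2, huCBb.2, sub_zero]
  have hM0 : 0 ≤ M := le_trans (abs_nonneg B1) (le_max_left _ _)
  -- periodicity of derived sequences
  have hbper : ∀ ℓ : ℤ, bd ε w (ℓ + (N:ℤ)) = bd ε w ℓ := bd_periodic hwD.1 ε
  have haper : ∀ ℓ : ℤ, bd ε uab (ℓ + (N:ℤ)) = bd ε uab ℓ := bd_periodic huab.1 ε
  have hZper : ∀ ℓ : ℤ, bd ε (bd ε (bd ε uab)) (ℓ + (N:ℤ)) = bd ε (bd ε (bd ε uab)) ℓ :=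
    bd_periodic (bd_periodic haper ε) ε
  -- components of b = bd w
  have hb1 : ∀ ℓ : ℤ, (bd ε w ℓ).1 = (bd ε uab ℓ).1 - (bd ε uCBb ℓ).1 := by
    intro ℓ; rw [show bd ε w ℓ = bd ε uab ℓ - bd ε uCBb ℓ from bd_sub ε uab uCBb ℓ]; rfl
  have hb2 : ∀ ℓ : ℤ, (bd ε w ℓ).2 = (bd ε uab ℓ).2 - (bd ε uCBb ℓ).2 := by
    intro ℓ; rw [show bd ε w ℓ = bd ε uab ℓ - bd ε uCBb ℓ from bd_sub ε uab uCBb ℓ]; rfl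
  -- Step 1: first variations agree
  have hdE : dE (fun y => Ea N ε φ y + Eb N ε α y) (yLin ε F) w
      = dE (fun y => ECB N ε φ y + Eb N ε α y) (yLin ε F) w := by
    rw [dE_ab_eq hφ hεne hF w, dE_CBb_eq hφ hεne hF w]
    congr 1
    have hsh : ∑ ℓ ∈ Finset.Icc (1:ℤ) (N:ℤ), (bd ε w (ℓ+1)).1
        = ∑ ℓ ∈ Finset.Icc (1:ℤ) (N:ℤ), (bd ε w ℓ).1 := by
      apply sum_shift hN1 (g := fun ℓ => (bd ε w ℓ).1)
      intro ℓ
      show (bd ε w (ℓ + (N:ℤ))).1 = (bd ε w ℓ).1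
      rw [hbper ℓ]
    rw [← sub_eq_zero, ← Finset.sum_sub_distrib]
    have hc : ∀ ℓ ∈ Finset.Icc (1:ℤ) (N:ℤ),
        (deriv φ F * (bd ε w ℓ).1 + deriv φ (2*F) * ((bd ε w (ℓ+1)).1 + (bd ε w ℓ).1))
          - (deriv φ F * (bd ε w ℓ).1 + deriv φ (2*F) * (2 * (bd ε w ℓ).1))
          = deriv φ (2*F) * (bd ε w (ℓ+1)).1 - deriv φ (2*F) * (bd ε w ℓ).1 :=
      fun ℓ _ => by ring
    rw [Finset.sum_congr rfl hc, Finset.sum_sub_distrib, ← Finset.mul_sum, ← Finset.mul_sum,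
      hsh, sub_self]
  -- Step 2: second variations agree on (uab,w) vs (uCBb,w)
  have hkey : d2E (fun y => Ea N ε φ y + Eb N ε α y) (yLin ε F) uab w
      = d2E (fun y => ECB N ε φ y + Eb N ε α y) (yLin ε F) uCBb w := by
    have h1 := heqa w hwD
    have h2 := heqCB w hwD
    linarith [hdE]
  -- abbreviations for the heavy sums
  have hγ1 : γ ≤ A1 + 4*B1 := min_le_left _ _
  have hγ2 : γ ≤ (A2 + 2*B2)/F := min_le_right _ _
  -- Step 3: linearity of the CB second variation
  have hE1 : d2E (fun y => ECB N ε φ y + Eb N ε α y) (yLin ε F) uab w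
      - d2E (fun y => ECB N ε φ y + Eb N ε α y) (yLin ε F) uCBb w
      = d2E (fun y => ECB N ε φ y + Eb N ε α y) (yLin ε F) w w := by
    rw [d2E_CBb_eq hφ hεne hF uab w, d2E_CBb_eq hφ hεne hF uCBb w,
      d2E_CBb_eq hφ hεne hF w w]
    apply sum_linear_comb
    · intro ℓ _
      simp only [Prod.smul_fst, Prod.smul_snd, smul_eq_mul, hb1, hb2]
      ring
    · intro ℓ _
      simp only [hb2]
      ring
  -- Step 4: consistency difference
  have hE2 : d2E (fun y => ECB N ε φ y + Eb N ε α y) (yLin ε F) uab w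
      - d2E (fun y => Ea N ε φ y + Eb N ε α y) (yLin ε F) uab w
      = ε * ∑ ℓ ∈ Finset.Icc (1:ℤ) (N:ℤ),
          (deriv (deriv φ) (2*F) *
            (4 * (bd ε uab ℓ).1 * (bd ε w ℓ).1
              - ((bd ε uab (ℓ+1)).1 + (bd ε uab ℓ).1) * ((bd ε w (ℓ+1)).1 + (bd ε w ℓ).1))
          + deriv φ (2*F) / (2*F) *
            (4 * (bd ε uab ℓ).2 * (bd ε w ℓ).2
              - ((bd ε uab (ℓ+1)).2 + (bd ε uab ℓ).2) * ((bd ε w (ℓ+1)).2 + (bd ε w ℓ).2))) := by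
    rw [d2E_CBb_eq hφ hεne hF uab w, d2E_ab_eq hφ hεne hF uab w]
    apply sum_cancel_comb
    intro ℓ _
    simp only [Prod.smul_fst, Prod.smul_snd, smul_eq_mul, Prod.fst_add, Prod.snd_add]
    have : (2:ℝ) * F ≠ 0 := h2F.ne'
    field_simp
    ring
  have hS1 := consistency_sum_fst hN1 hεne uab w huab.1 hwD.1
  have hS2 := consistency_sum_snd hN1 hεne uab w huab.1 hwD.1
  have hsum : ∑ ℓ ∈ Finset.Icc (1:ℤ) (N:ℤ),
        (deriv (deriv φ) (2*F) *
          (4 * (bd ε uab ℓ).1 * (bd ε w ℓ).1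
            - ((bd ε uab (ℓ+1)).1 + (bd ε uab ℓ).1) * ((bd ε w (ℓ+1)).1 + (bd ε w ℓ).1))
        + deriv φ (2*F) / (2*F) *
          (4 * (bd ε uab ℓ).2 * (bd ε w ℓ).2
            - ((bd ε uab (ℓ+1)).2 + (bd ε uab ℓ).2) * ((bd ε w (ℓ+1)).2 + (bd ε w ℓ).2)))
      = deriv (deriv φ) (2*F) * (- ε^2 * ∑ ℓ ∈ Finset.Icc (1:ℤ) (N:ℤ),
            (bd ε (bd ε (bd ε uab)) (ℓ+1)).1 * (bd ε w ℓ).1)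
        + deriv φ (2*F) / (2*F) * (- ε^2 * ∑ ℓ ∈ Finset.Icc (1:ℤ) (N:ℤ),
            (bd ε (bd ε (bd ε uab)) (ℓ+1)).2 * (bd ε w ℓ).2) := by
    rw [Finset.sum_add_distrib, ← Finset.mul_sum, ← Finset.mul_sum, hS1, hS2]
  -- Step 5: coercivity
  have hQpos : γ * (ε * ∑ ℓ ∈ Finset.Icc (1:ℤ) (N:ℤ), (enorm2 (bd ε w ℓ))^2)
      ≤ d2E (fun y => ECB N ε φ y + Eb N ε α y) (yLin ε F) w w := by
    rw [d2E_CBb_eq hφ hεne hF w w]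
    have hterm : ∀ ℓ ∈ Finset.Icc (1:ℤ) (N:ℤ),
        γ * (enorm2 (bd ε w ℓ))^2
          ≤ deriv (deriv φ) F * (bd ε w ℓ).1 * (bd ε w ℓ).1
            + deriv φ F * ((bd ε w ℓ).2 * (bd ε w ℓ).2) / F
            + (deriv (deriv φ) (2*F) * ((2:ℝ) • bd ε w ℓ).1 * ((2:ℝ) • bd ε w ℓ).1
              + deriv φ (2*F) * (((2:ℝ) • bd ε w ℓ).2 * ((2:ℝ) • bd ε w ℓ).2) / (2*F)) := by
      intro ℓ _
      rw [enorm2_sq]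
      simp only [Prod.smul_fst, Prod.smul_snd, smul_eq_mul]
      rw [← hA1, ← hA2, ← hB1, ← hB2]
      have key2 : A2 * ((bd ε w ℓ).2 * (bd ε w ℓ).2) / F
          + B2 * ((2 * (bd ε w ℓ).2) * (2 * (bd ε w ℓ).2)) / (2*F)
          = ((A2 + 2*B2)/F) * ((bd ε w ℓ).2)^2 := by
        field_simp
      nlinarith [mul_le_mul_of_nonneg_right hγ1 (sq_nonneg ((bd ε w ℓ).1)),
        mul_le_mul_of_nonneg_right hγ2 (sq_nonneg ((bd ε w ℓ).2)), key2]
    have hG : (0:ℝ) ≤ ε * ∑ ℓ ∈ Finset.Icc (1:ℤ) (N:ℤ),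
        α * (((bd ε w (ℓ+1)).2 - (bd ε w ℓ).2) * ((bd ε w (ℓ+1)).2 - (bd ε w ℓ).2)) / F ^ 2 := by
      apply mul_nonneg hε0.le
      apply Finset.sum_nonneg
      intro ℓ _
      exact div_nonneg (mul_nonneg hα.le (mul_self_nonneg _)) (sq_nonneg F)
    have hmain : γ * (ε * ∑ ℓ ∈ Finset.Icc (1:ℤ) (N:ℤ), (enorm2 (bd ε w ℓ))^2)
        ≤ ε * ∑ ℓ ∈ Finset.Icc (1:ℤ) (N:ℤ),
          (deriv (deriv φ) F * (bd ε w ℓ).1 * (bd ε w ℓ).1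
            + deriv φ F * ((bd ε w ℓ).2 * (bd ε w ℓ).2) / F
            + (deriv (deriv φ) (2*F) * ((2:ℝ) • bd ε w ℓ).1 * ((2:ℝ) • bd ε w ℓ).1
              + deriv φ (2*F) * (((2:ℝ) • bd ε w ℓ).2 * (((2:ℝ) • bd ε w ℓ)).2) / (2*F))) := by
      rw [show γ * (ε * ∑ ℓ ∈ Finset.Icc (1:ℤ) (N:ℤ), (enorm2 (bd ε w ℓ))^2)
          = ε * (γ * ∑ ℓ ∈ Finset.Icc (1:ℤ) (N:ℤ), (enorm2 (bd ε w ℓ))^2) by ring,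
        Finset.mul_sum]
      apply mul_le_mul_of_nonneg_left _ hε0.le
      exact Finset.sum_le_sum hterm
    linarith [hmain, hG]
  -- Step 6: bound on consistency term
  have hshiftZ : ∑ ℓ ∈ Finset.Icc (1:ℤ) (N:ℤ), (enorm2 (bd ε (bd ε (bd ε uab)) (ℓ+1)))^2
      = ∑ ℓ ∈ Finset.Icc (1:ℤ) (N:ℤ), (enorm2 (bd ε (bd ε (bd ε uab)) ℓ))^2 := by
    apply sum_shift hN1 (g := fun ℓ => (enorm2 (bd ε (bd ε (bd ε uab)) ℓ))^2)
    intro ℓ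
    show (enorm2 (bd ε (bd ε (bd ε uab)) (ℓ + (N:ℤ))))^2
        = (enorm2 (bd ε (bd ε (bd ε uab)) ℓ))^2
    rw [hZper ℓ]
  have hT : -(deriv (deriv φ) (2*F) * ∑ ℓ ∈ Finset.Icc (1:ℤ) (N:ℤ),
        (bd ε (bd ε (bd ε uab)) (ℓ+1)).1 * (bd ε w ℓ).1
      + deriv φ (2*F) / (2*F) * ∑ ℓ ∈ Finset.Icc (1:ℤ) (N:ℤ),
        (bd ε (bd ε (bd ε uab)) (ℓ+1)).2 * (bd ε w ℓ).2)
      ≤ M * (Real.sqrt (∑ ℓ ∈ Finset.Icc (1:ℤ) (N:ℤ),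
            (enorm2 (bd ε (bd ε (bd ε uab)) ℓ))^2)
          * Real.sqrt (∑ ℓ ∈ Finset.Icc (1:ℤ) (N:ℤ), (enorm2 (bd ε w ℓ))^2)) := by
    have e0 : deriv (deriv φ) (2*F) * ∑ ℓ ∈ Finset.Icc (1:ℤ) (N:ℤ),
          (bd ε (bd ε (bd ε uab)) (ℓ+1)).1 * (bd ε w ℓ).1
        + deriv φ (2*F) / (2*F) * ∑ ℓ ∈ Finset.Icc (1:ℤ) (N:ℤ),
          (bd ε (bd ε (bd ε uab)) (ℓ+1)).2 * (bd ε w ℓ).2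
        = ∑ ℓ ∈ Finset.Icc (1:ℤ) (N:ℤ),
          (B1 * (bd ε (bd ε (bd ε uab)) (ℓ+1)).1 * (bd ε w ℓ).1
            + B2/(2*F) * (bd ε (bd ε (bd ε uab)) (ℓ+1)).2 * (bd ε w ℓ).2) := by
      rw [Finset.sum_add_distrib, Finset.mul_sum, Finset.mul_sum, ← hB1, ← hB2]
      congr 1 <;> exact Finset.sum_congr rfl (fun ℓ _ => by ring)
    rw [e0]
    calc -(∑ ℓ ∈ Finset.Icc (1:ℤ) (N:ℤ),
          (B1 * (bd ε (bd ε (bd ε uab)) (ℓ+1)).1 * (bd ε w ℓ).1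
            + B2/(2*F) * (bd ε (bd ε (bd ε uab)) (ℓ+1)).2 * (bd ε w ℓ).2))
        ≤ |∑ ℓ ∈ Finset.Icc (1:ℤ) (N:ℤ),
          (B1 * (bd ε (bd ε (bd ε uab)) (ℓ+1)).1 * (bd ε w ℓ).1
            + B2/(2*F) * (bd ε (bd ε (bd ε uab)) (ℓ+1)).2 * (bd ε w ℓ).2)| := neg_le_abs _
      _ ≤ ∑ ℓ ∈ Finset.Icc (1:ℤ) (N:ℤ),
          |B1 * (bd ε (bd ε (bd ε uab)) (ℓ+1)).1 * (bd ε w ℓ).1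
            + B2/(2*F) * (bd ε (bd ε (bd ε uab)) (ℓ+1)).2 * (bd ε w ℓ).2| :=
        Finset.abs_sum_le_sum_abs _ _
      _ ≤ ∑ ℓ ∈ Finset.Icc (1:ℤ) (N:ℤ),
          M * (enorm2 (bd ε (bd ε (bd ε uab)) (ℓ+1)) * enorm2 (bd ε w ℓ)) :=
        Finset.sum_le_sum (fun ℓ _ => pt_bound B1 (B2/(2*F)) _ _)
      _ = M * ∑ ℓ ∈ Finset.Icc (1:ℤ) (N:ℤ),
          (enorm2 (bd ε (bd ε (bd ε uab)) (ℓ+1)) * enorm2 (bd ε w ℓ)) := by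
        rw [Finset.mul_sum]
      _ ≤ M * (Real.sqrt (∑ ℓ ∈ Finset.Icc (1:ℤ) (N:ℤ),
            (enorm2 (bd ε (bd ε (bd ε uab)) (ℓ+1)))^2)
          * Real.sqrt (∑ ℓ ∈ Finset.Icc (1:ℤ) (N:ℤ), (enorm2 (bd ε w ℓ))^2)) :=
        mul_le_mul_of_nonneg_left (sum_CS _ _ _) hM0
      _ = M * (Real.sqrt (∑ ℓ ∈ Finset.Icc (1:ℤ) (N:ℤ),
            (enorm2 (bd ε (bd ε (bd ε uab)) ℓ))^2)
          * Real.sqrt (∑ ℓ ∈ Finset.Icc (1:ℤ) (N:ℤ), (enorm2 (bd ε w ℓ))^2)) := by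
        rw [hshiftZ]
  -- Step 7: assemble the chain
  have hchain : γ * (ε * ∑ ℓ ∈ Finset.Icc (1:ℤ) (N:ℤ), (enorm2 (bd ε w ℓ))^2)
      ≤ ε^3 * (M * (Real.sqrt (∑ ℓ ∈ Finset.Icc (1:ℤ) (N:ℤ),
            (enorm2 (bd ε (bd ε (bd ε uab)) ℓ))^2)
          * Real.sqrt (∑ ℓ ∈ Finset.Icc (1:ℤ) (N:ℤ), (enorm2 (bd ε w ℓ))^2))) := by
    have heq2 : d2E (fun y => ECB N ε φ y + Eb N ε α y) (yLin ε F) w w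
        = ε * (deriv (deriv φ) (2*F) * (- ε^2 * ∑ ℓ ∈ Finset.Icc (1:ℤ) (N:ℤ),
              (bd ε (bd ε (bd ε uab)) (ℓ+1)).1 * (bd ε w ℓ).1)
            + deriv φ (2*F) / (2*F) * (- ε^2 * ∑ ℓ ∈ Finset.Icc (1:ℤ) (N:ℤ),
              (bd ε (bd ε (bd ε uab)) (ℓ+1)).2 * (bd ε w ℓ).2)) := by
      rw [← hsum, ← hE2, ← hE1, hkey]
    calc γ * (ε * ∑ ℓ ∈ Finset.Icc (1:ℤ) (N:ℤ), (enorm2 (bd ε w ℓ))^2)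
        ≤ d2E (fun y => ECB N ε φ y + Eb N ε α y) (yLin ε F) w w := hQpos
      _ = ε * (deriv (deriv φ) (2*F) * (- ε^2 * ∑ ℓ ∈ Finset.Icc (1:ℤ) (N:ℤ),
              (bd ε (bd ε (bd ε uab)) (ℓ+1)).1 * (bd ε w ℓ).1)
            + deriv φ (2*F) / (2*F) * (- ε^2 * ∑ ℓ ∈ Finset.Icc (1:ℤ) (N:ℤ),
              (bd ε (bd ε (bd ε uab)) (ℓ+1)).2 * (bd ε w ℓ).2)) := heq2
      _ = ε^3 * (-(deriv (deriv φ) (2*F) * ∑ ℓ ∈ Finset.Icc (1:ℤ) (N:ℤ),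
              (bd ε (bd ε (bd ε uab)) (ℓ+1)).1 * (bd ε w ℓ).1
            + deriv φ (2*F) / (2*F) * ∑ ℓ ∈ Finset.Icc (1:ℤ) (N:ℤ),
              (bd ε (bd ε (bd ε uab)) (ℓ+1)).2 * (bd ε w ℓ).2)) := by ring
      _ ≤ ε^3 * (M * (Real.sqrt (∑ ℓ ∈ Finset.Icc (1:ℤ) (N:ℤ),
              (enorm2 (bd ε (bd ε (bd ε uab)) ℓ))^2)
            * Real.sqrt (∑ ℓ ∈ Finset.Icc (1:ℤ) (N:ℤ), (enorm2 (bd ε w ℓ))^2))) :=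
        mul_le_mul_of_nonneg_left hT (by positivity)
  -- Step 8: conclude
  have hnb : nrm N ε (bd ε w)
      = Real.sqrt ε * Real.sqrt (∑ ℓ ∈ Finset.Icc (1:ℤ) (N:ℤ), (enorm2 (bd ε w ℓ))^2) := by
    rw [nrm, Real.sqrt_mul hε0.le]
  have hn3 : nrm N ε (bd ε (bd ε (bd ε uab)))
      = Real.sqrt ε * Real.sqrt (∑ ℓ ∈ Finset.Icc (1:ℤ) (N:ℤ),
          (enorm2 (bd ε (bd ε (bd ε uab)) ℓ))^2) := by
    rw [nrm, Real.sqrt_mul hε0.le]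
  have hsq : Real.sqrt ε * Real.sqrt ε = ε := Real.mul_self_sqrt hε0.le
  have hnb2 : (nrm N ε (bd ε w))^2
      = ε * ∑ ℓ ∈ Finset.Icc (1:ℤ) (N:ℤ), (enorm2 (bd ε w ℓ))^2 := by
    rw [nrm, Real.sq_sqrt (by positivity)]
  have hfinal : γ * (nrm N ε (bd ε w))^2
      ≤ ε^2 * M * nrm N ε (bd ε (bd ε (bd ε uab))) * nrm N ε (bd ε w) := by
    rw [hnb2]
    calc γ * (ε * ∑ ℓ ∈ Finset.Icc (1:ℤ) (N:ℤ), (enorm2 (bd ε w ℓ))^2)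
        ≤ ε^3 * (M * (Real.sqrt (∑ ℓ ∈ Finset.Icc (1:ℤ) (N:ℤ),
              (enorm2 (bd ε (bd ε (bd ε uab)) ℓ))^2)
            * Real.sqrt (∑ ℓ ∈ Finset.Icc (1:ℤ) (N:ℤ), (enorm2 (bd ε w ℓ))^2))) := hchain
      _ = ε^2 * M * nrm N ε (bd ε (bd ε (bd ε uab))) * nrm N ε (bd ε w) := by
          rw [hnb, hn3]
          linear_combination (-(ε^2) * M * Real.sqrt (∑ ℓ ∈ Finset.Icc (1:ℤ) (N:ℤ),
              (enorm2 (bd ε (bd ε (bd ε uab)) ℓ))^2)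
            * Real.sqrt (∑ ℓ ∈ Finset.Icc (1:ℤ) (N:ℤ), (enorm2 (bd ε w ℓ))^2)) * hsq
  have hnbnn : 0 ≤ nrm N ε (bd ε w) := Real.sqrt_nonneg _
  have hn3nn : 0 ≤ nrm N ε (bd ε (bd ε (bd ε uab))) := Real.sqrt_nonneg _
  rcases eq_or_lt_of_le hnbnn with h0 | hpos
  · rw [← h0]
    positivity
  · have h1 : γ * nrm N ε (bd ε w) ≤ ε^2 * M * nrm N ε (bd ε (bd ε (bd ε uab))) := by
      have := hfinal
      rw [pow_two] at this
      have h2 := (mul_le_mul_iff_of_pos_right hpos).mp (by nlinarith [this] :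
        γ * nrm N ε (bd ε w) * nrm N ε (bd ε w)
          ≤ ε^2 * M * nrm N ε (bd ε (bd ε (bd ε uab))) * nrm N ε (bd ε w))
      exact h2
    rw [div_mul_eq_mul_div, le_div_iff₀ hγ]
    nlinarith [h1]
end
end

section
/- Let y_F be the linear chain with nearest-neighbor spacing Fε and suppose φ''(2F) ≤ 0. Then for every constrained displacement u ∈ 𝒰̃, δ²E^QNL(y_F)[u,u] ≥ (φ''(F) + 4 φ''(2F)) ‖u'‖²_{ℓ²_ε}, with equality for every u ∈ 𝒰̃ satisfying u''_ℓ = 0 for ℓ = 2, …, K+1. -/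
noncomputable section

open Real Finset

private lemma diffAt_phi {φ : ℝ → ℝ} (hφ : ContDiffOn ℝ 2 φ (Set.Ioi 0)) {x : ℝ} (hx : 0 < x) :
    DifferentiableAt ℝ φ x :=
  (hφ.contDiffAt (isOpen_Ioi.mem_nhds hx)).differentiableAt (by norm_num)

private lemma diffAt_dphi {φ : ℝ → ℝ} (hφ : ContDiffOn ℝ 2 φ (Set.Ioi 0)) {x : ℝ} (hx : 0 < x) :
    DifferentiableAt ℝ (deriv φ) x :=
  (((hφ.deriv_of_isOpen (m := 1) isOpen_Ioi (by norm_num)).contDiffAt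
    (isOpen_Ioi.mem_nhds hx)).differentiableAt (by norm_num))

private lemma hda_lin {φ : ℝ → ℝ} (c d s : ℝ) (h : DifferentiableAt ℝ φ (c + s * d)) :
    HasDerivAt (fun r => φ (c + r * d)) (deriv φ (c + s * d) * d) s := by
  have h1 : HasDerivAt (fun r : ℝ => c + r * d) d s := by
    simpa using ((hasDerivAt_id s).mul_const d).const_add c
  exact h.hasDerivAt.comp s h1

private lemma hda_lin2 {φ : ℝ → ℝ} (c d : ℝ) (h : DifferentiableAt ℝ (deriv φ) c) :
    HasDerivAt (fun r => deriv φ (c + r * d) * d) (deriv (deriv φ) c * d * d) 0 := by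
  have h0 : DifferentiableAt ℝ (deriv φ) (c + 0 * d) := by simpa using h
  have h2 := (hda_lin c d 0 h0).mul_const d
  simpa using h2

private lemma sum_shift_s15 (f : ℤ → ℝ) (a b : ℤ) :
    ∑ ℓ ∈ Finset.Icc a b, f (ℓ + 1) = ∑ ℓ ∈ Finset.Icc (a+1) (b+1), f ℓ := by
  apply Finset.sum_nbij' (fun ℓ => ℓ + 1) (fun ℓ => ℓ - 1) <;>
    simp_all [Finset.mem_Icc] <;> omega

private lemma enorm2_x (x : ℝ) : enorm2 (x, 0) = |x| := by
  simp [enorm2, Real.sqrt_sq_eq_abs]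

theorem stmt_15 (N : ℕ) (hN : 4 ≤ N) (ε : ℝ) (hε : ε = (N : ℝ)⁻¹)
    (φ : ℝ → ℝ) (hφ : ContDiffOn ℝ 2 φ (Set.Ioi 0)) (F : ℝ) (hF : 0 < F)
    (K : ℕ) (hK1 : 1 < K) (hK2 : K + 2 < N)
    (hφ2 : deriv (deriv φ) (2 * F) ≤ 0) :
    ∀ u : ℤ → ℝ × ℝ, IsDisp1D N u →
      d2E (EQNL N K ε φ) (yLin ε F) u u ≥
        (deriv (deriv φ) F + 4 * deriv (deriv φ) (2 * F)) * (nrm N ε (bd ε u)) ^ 2 ∧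
      ((∀ ℓ : ℤ, 2 ≤ ℓ → ℓ ≤ (K : ℤ) + 1 → bd ε (bd ε u) ℓ = 0) →
        d2E (EQNL N K ε φ) (yLin ε F) u u =
          (deriv (deriv φ) F + 4 * deriv (deriv φ) (2 * F)) * (nrm N ε (bd ε u)) ^ 2) := by
  intro u hu
  obtain ⟨-, hu2⟩ := hu
  have hNR : (0:ℝ) < (N:ℝ) := by
    have : 0 < N := by omega
    exact_mod_cast this
  have hε0 : 0 < ε := by rw [hε]; positivity
  have hεne : ε ≠ 0 := ne_of_gt hε0
  have hKN : (K:ℤ) + 2 < (N:ℤ) := by exact_mod_cast hK2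
  have hK1' : (1:ℤ) < (K:ℤ) := by exact_mod_cast hK1
  have h2F : (0:ℝ) < 2 * F := by linarith
  obtain ⟨b, hbdef⟩ : ∃ b : ℤ → ℝ, b = fun ℓ => ε⁻¹ * ((u ℓ).1 - (u (ℓ-1)).1) := ⟨_, rfl⟩
  -- backward differences
  have hbdu : ∀ ℓ : ℤ, bd ε u ℓ = (b ℓ, 0) := by
    intro ℓ
    rw [bd]
    refine Prod.ext ?_ ?_
    · rw [hbdef]; simp
    · simp [hu2]
  have hbdy : ∀ (r : ℝ) (ℓ : ℤ), bd ε (fun j => yLin ε F j + r • u j) ℓ = (F + r * b ℓ, 0) := by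
    intro r ℓ
    rw [bd]
    refine Prod.ext ?_ ?_
    · simp only [yLin, Prod.fst_sub, Prod.fst_add, Prod.smul_fst, smul_eq_mul, hbdef]
      push_cast
      field_simp
      ring
    · simp only [yLin, Prod.snd_sub, Prod.snd_add, Prod.smul_snd, smul_eq_mul, hu2]
      norm_num
  -- the bound M and the radius δ
  obtain ⟨M, hMdef⟩ : ∃ M : ℝ, M = 1 + ∑ ℓ ∈ Finset.Icc (0:ℤ) ((N:ℤ)+1), |b ℓ| := ⟨_, rfl⟩
  have hM1 : 1 ≤ M := by
    have : (0:ℝ) ≤ ∑ ℓ ∈ Finset.Icc (0:ℤ) ((N:ℤ)+1), |b ℓ| :=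
      Finset.sum_nonneg fun ℓ _ => abs_nonneg _
    simp only [hMdef]; linarith
  have hMb : ∀ ℓ ∈ Finset.Icc (0:ℤ) ((N:ℤ)+1), |b ℓ| ≤ M := by
    intro ℓ hℓ
    have h1 : |b ℓ| ≤ ∑ j ∈ Finset.Icc (0:ℤ) ((N:ℤ)+1), |b j| :=
      Finset.single_le_sum (f := fun j => |b j|) (fun j _ => abs_nonneg _) hℓ
    simp only [hMdef]; linarith
  obtain ⟨δ, hδdef⟩ : ∃ d : ℝ, d = F / (2 * M) := ⟨_, rfl⟩
  have hδ0 : 0 < δ := by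
    rw [hδdef]; exact div_pos hF (by linarith)
  have hpos1 : ∀ r : ℝ, |r| < δ → ∀ x : ℝ, |x| ≤ M → 0 < F + r * x := by
    intro r hr x hx
    have h1 : |r * x| ≤ δ * M := by
      rw [abs_mul]
      exact mul_le_mul hr.le hx (abs_nonneg x) hδ0.le
    have h2 : δ * M = F / 2 := by
      rw [hδdef]; field_simp
    have h3 := neg_abs_le (r * x)
    linarith
  have hpos2 : ∀ r : ℝ, |r| < δ → ∀ x : ℝ, |x| ≤ 2 * M → 0 < 2 * F + r * x := by
    intro r hr x hx
    have h1 : |r * x| ≤ δ * (2 * M) := by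
      rw [abs_mul]
      exact mul_le_mul hr.le hx (abs_nonneg x) hδ0.le
    have h2 : δ * (2 * M) = F := by
      rw [hδdef]; field_simp
    have h3 := neg_abs_le (r * x)
    linarith
  -- concrete positivity of arguments
  have hmem : ∀ ℓ : ℤ, 0 ≤ ℓ → ℓ ≤ (N:ℤ)+1 → |b ℓ| ≤ M := by
    intro ℓ h1 h2
    exact hMb ℓ (Finset.mem_Icc.mpr ⟨h1, h2⟩)
  have hpA : ∀ r : ℝ, |r| < δ → ∀ ℓ : ℤ, 0 ≤ ℓ → ℓ ≤ (N:ℤ)+1 → 0 < F + r * b ℓ := by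
    intro r hr ℓ h1 h2
    exact hpos1 r hr (b ℓ) (hmem ℓ h1 h2)
  have hpB : ∀ r : ℝ, |r| < δ → ∀ ℓ ∈ Finset.Icc (1:ℤ) (K:ℤ),
      0 < 2 * F + r * (b (ℓ+1) + b ℓ) := by
    intro r hr ℓ hℓ
    rw [Finset.mem_Icc] at hℓ
    refine hpos2 r hr _ ?_
    have e1 : |b (ℓ+1)| ≤ M := hmem _ (by omega) (by omega)
    have e2 : |b ℓ| ≤ M := hmem _ (by omega) (by omega)
    calc |b (ℓ+1) + b ℓ| ≤ |b (ℓ+1)| + |b ℓ| := abs_add_le _ _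
      _ ≤ 2 * M := by linarith
  have hp2 : ∀ r : ℝ, |r| < δ → ∀ ℓ : ℤ, 0 ≤ ℓ → ℓ ≤ (N:ℤ)+1 →
      0 < 2 * F + r * (2 * b ℓ) := by
    intro r hr ℓ h1 h2
    refine hpos2 r hr _ ?_
    have := hmem ℓ h1 h2
    rw [abs_mul]
    simp only [abs_two]
    linarith [abs_nonneg (b ℓ)]
  -- the reduced energy function g and its derivative G
  obtain ⟨g, hgdef⟩ : ∃ g : ℝ → ℝ, g = fun r =>
      ε * ∑ ℓ ∈ Finset.Icc (1:ℤ) (N:ℤ), φ (F + r * b ℓ)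
      + ε * ∑ ℓ ∈ Finset.Icc (1:ℤ) (K:ℤ), φ (2*F + r * (b (ℓ+1) + b ℓ))
      + ε * ∑ ℓ ∈ Finset.Icc ((K:ℤ)+2) (N:ℤ), φ (2*F + r * (2 * b ℓ))
      + ε / 2 * φ (2*F + r * (2 * b 1)) + ε / 2 * φ (2*F + r * (2 * b ((K:ℤ)+1))) := ⟨_, rfl⟩
  obtain ⟨G, hGdef⟩ : ∃ G : ℝ → ℝ, G = fun s =>
      ε * ∑ ℓ ∈ Finset.Icc (1:ℤ) (N:ℤ), deriv φ (F + s * b ℓ) * b ℓ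
      + ε * ∑ ℓ ∈ Finset.Icc (1:ℤ) (K:ℤ), deriv φ (2*F + s * (b (ℓ+1) + b ℓ)) * (b (ℓ+1) + b ℓ)
      + ε * ∑ ℓ ∈ Finset.Icc ((K:ℤ)+2) (N:ℤ), deriv φ (2*F + s * (2 * b ℓ)) * (2 * b ℓ)
      + ε / 2 * (deriv φ (2*F + s * (2 * b 1)) * (2 * b 1))
      + ε / 2 * (deriv φ (2*F + s * (2 * b ((K:ℤ)+1))) * (2 * b ((K:ℤ)+1))) := ⟨_, rfl⟩
  have hE : ∀ r : ℝ, |r| < δ → EQNL N K ε φ (fun j => yLin ε F j + r • u j) = g r := by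
    intro r hr
    rw [EQNL, hgdef]
    have e1 : ∀ ℓ ∈ Finset.Icc (1:ℤ) (N:ℤ),
        φ (enorm2 (bd ε (fun j => yLin ε F j + r • u j) ℓ)) = φ (F + r * b ℓ) := by
      intro ℓ hℓ
      rw [Finset.mem_Icc] at hℓ
      rw [hbdy, enorm2_x, abs_of_pos (hpA r hr ℓ (by omega) (by omega))]
    have e2 : ∀ ℓ ∈ Finset.Icc (1:ℤ) (K:ℤ),
        φ (enorm2 (bd ε (fun j => yLin ε F j + r • u j) (ℓ+1)
          + bd ε (fun j => yLin ε F j + r • u j) ℓ)) = φ (2*F + r * (b (ℓ+1) + b ℓ)) := by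
      intro ℓ hℓ
      have hsum : bd ε (fun j => yLin ε F j + r • u j) (ℓ+1)
          + bd ε (fun j => yLin ε F j + r • u j) ℓ = (2*F + r * (b (ℓ+1) + b ℓ), 0) := by
        rw [hbdy, hbdy, Prod.mk_add_mk]
        refine Prod.ext ?_ ?_
        · show F + r * b (ℓ+1) + (F + r * b ℓ) = 2*F + r * (b (ℓ+1) + b ℓ)
          ring
        · norm_num
      rw [hsum, enorm2_x, abs_of_pos (hpB r hr ℓ hℓ)]
    have e3 : ∀ ℓ ∈ Finset.Icc ((K:ℤ)+2) (N:ℤ),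
        φ (2 * enorm2 (bd ε (fun j => yLin ε F j + r • u j) ℓ)) = φ (2*F + r * (2 * b ℓ)) := by
      intro ℓ hℓ
      rw [Finset.mem_Icc] at hℓ
      rw [hbdy, enorm2_x, abs_of_pos (hpA r hr ℓ (by omega) (by omega)),
        show 2 * (F + r * b ℓ) = 2*F + r * (2 * b ℓ) from by ring]
    have e4 : φ (2 * enorm2 (bd ε (fun j => yLin ε F j + r • u j) 1))
        = φ (2*F + r * (2 * b 1)) := by
      rw [hbdy, enorm2_x, abs_of_pos (hpA r hr 1 (by omega) (by omega)),
        show 2 * (F + r * b 1) = 2*F + r * (2 * b 1) from by ring]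
    have e5 : φ (2 * enorm2 (bd ε (fun j => yLin ε F j + r • u j) ((K:ℤ)+1)))
        = φ (2*F + r * (2 * b ((K:ℤ)+1))) := by
      rw [hbdy, enorm2_x, abs_of_pos (hpA r hr _ (by omega) (by omega)),
        show 2 * (F + r * b ((K:ℤ)+1)) = 2*F + r * (2 * b ((K:ℤ)+1)) from by ring]
    rw [Finset.sum_congr rfl e1, Finset.sum_congr rfl e2, Finset.sum_congr rfl e3, e4, e5]
  have hgd : ∀ s : ℝ, |s| < δ → HasDerivAt g (G s) s := by
    intro s hs
    have p1 : HasDerivAt (fun r : ℝ => ε * ∑ ℓ ∈ Finset.Icc (1:ℤ) (N:ℤ), φ (F + r * b ℓ))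
        (ε * ∑ ℓ ∈ Finset.Icc (1:ℤ) (N:ℤ), deriv φ (F + s * b ℓ) * b ℓ) s :=
      HasDerivAt.const_mul ε (HasDerivAt.fun_sum fun ℓ hℓ => by
        rw [Finset.mem_Icc] at hℓ
        exact hda_lin F (b ℓ) s (diffAt_phi hφ (hpA s hs ℓ (by omega) (by omega))))
    have p2 : HasDerivAt
        (fun r : ℝ => ε * ∑ ℓ ∈ Finset.Icc (1:ℤ) (K:ℤ), φ (2*F + r * (b (ℓ+1) + b ℓ)))
        (ε * ∑ ℓ ∈ Finset.Icc (1:ℤ) (K:ℤ),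
          deriv φ (2*F + s * (b (ℓ+1) + b ℓ)) * (b (ℓ+1) + b ℓ)) s :=
      HasDerivAt.const_mul ε (HasDerivAt.fun_sum fun ℓ hℓ =>
        hda_lin (2*F) (b (ℓ+1) + b ℓ) s (diffAt_phi hφ (hpB s hs ℓ hℓ)))
    have p3 : HasDerivAt
        (fun r : ℝ => ε * ∑ ℓ ∈ Finset.Icc ((K:ℤ)+2) (N:ℤ), φ (2*F + r * (2 * b ℓ)))
        (ε * ∑ ℓ ∈ Finset.Icc ((K:ℤ)+2) (N:ℤ), deriv φ (2*F + s * (2 * b ℓ)) * (2 * b ℓ)) s :=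
      HasDerivAt.const_mul ε (HasDerivAt.fun_sum fun ℓ hℓ => by
        rw [Finset.mem_Icc] at hℓ
        exact hda_lin (2*F) (2 * b ℓ) s (diffAt_phi hφ (hp2 s hs ℓ (by omega) (by omega))))
    have p4 : HasDerivAt (fun r : ℝ => ε / 2 * φ (2*F + r * (2 * b 1)))
        (ε / 2 * (deriv φ (2*F + s * (2 * b 1)) * (2 * b 1))) s :=
      HasDerivAt.const_mul (ε/2)
        (hda_lin (2*F) (2 * b 1) s (diffAt_phi hφ (hp2 s hs 1 (by omega) (by omega))))
    have p5 : HasDerivAt (fun r : ℝ => ε / 2 * φ (2*F + r * (2 * b ((K:ℤ)+1))))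
        (ε / 2 * (deriv φ (2*F + s * (2 * b ((K:ℤ)+1))) * (2 * b ((K:ℤ)+1)))) s :=
      HasDerivAt.const_mul (ε/2)
        (hda_lin (2*F) (2 * b ((K:ℤ)+1)) s (diffAt_phi hφ (hp2 s hs _ (by omega) (by omega))))
    rw [hgdef, hGdef]
    exact (((p1.add p2).add p3).add p4).add p5
  obtain ⟨V, hVdef⟩ : ∃ V : ℝ, V =
      ε * ∑ ℓ ∈ Finset.Icc (1:ℤ) (N:ℤ), deriv (deriv φ) F * b ℓ * b ℓ
      + ε * ∑ ℓ ∈ Finset.Icc (1:ℤ) (K:ℤ),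
          deriv (deriv φ) (2*F) * (b (ℓ+1) + b ℓ) * (b (ℓ+1) + b ℓ)
      + ε * ∑ ℓ ∈ Finset.Icc ((K:ℤ)+2) (N:ℤ), deriv (deriv φ) (2*F) * (2 * b ℓ) * (2 * b ℓ)
      + ε / 2 * (deriv (deriv φ) (2*F) * (2 * b 1) * (2 * b 1))
      + ε / 2 * (deriv (deriv φ) (2*F) * (2 * b ((K:ℤ)+1)) * (2 * b ((K:ℤ)+1))) := ⟨_, rfl⟩
  have hVal : HasDerivAt G V 0 := by
    have q1 : HasDerivAt
        (fun s : ℝ => ε * ∑ ℓ ∈ Finset.Icc (1:ℤ) (N:ℤ), deriv φ (F + s * b ℓ) * b ℓ)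
        (ε * ∑ ℓ ∈ Finset.Icc (1:ℤ) (N:ℤ), deriv (deriv φ) F * b ℓ * b ℓ) 0 :=
      HasDerivAt.const_mul ε (HasDerivAt.fun_sum fun ℓ _ =>
        hda_lin2 F (b ℓ) (diffAt_dphi hφ hF))
    have q2 : HasDerivAt
        (fun s : ℝ => ε * ∑ ℓ ∈ Finset.Icc (1:ℤ) (K:ℤ),
          deriv φ (2*F + s * (b (ℓ+1) + b ℓ)) * (b (ℓ+1) + b ℓ))
        (ε * ∑ ℓ ∈ Finset.Icc (1:ℤ) (K:ℤ),
          deriv (deriv φ) (2*F) * (b (ℓ+1) + b ℓ) * (b (ℓ+1) + b ℓ)) 0 :=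
      HasDerivAt.const_mul ε (HasDerivAt.fun_sum fun ℓ _ =>
        hda_lin2 (2*F) (b (ℓ+1) + b ℓ) (diffAt_dphi hφ h2F))
    have q3 : HasDerivAt
        (fun s : ℝ => ε * ∑ ℓ ∈ Finset.Icc ((K:ℤ)+2) (N:ℤ),
          deriv φ (2*F + s * (2 * b ℓ)) * (2 * b ℓ))
        (ε * ∑ ℓ ∈ Finset.Icc ((K:ℤ)+2) (N:ℤ),
          deriv (deriv φ) (2*F) * (2 * b ℓ) * (2 * b ℓ)) 0 :=
      HasDerivAt.const_mul ε (HasDerivAt.fun_sum fun ℓ _ =>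
        hda_lin2 (2*F) (2 * b ℓ) (diffAt_dphi hφ h2F))
    have q4 : HasDerivAt (fun s : ℝ => ε / 2 * (deriv φ (2*F + s * (2 * b 1)) * (2 * b 1)))
        (ε / 2 * (deriv (deriv φ) (2*F) * (2 * b 1) * (2 * b 1))) 0 :=
      HasDerivAt.const_mul (ε/2) (hda_lin2 (2*F) (2 * b 1) (diffAt_dphi hφ h2F))
    have q5 : HasDerivAt
        (fun s : ℝ => ε / 2 * (deriv φ (2*F + s * (2 * b ((K:ℤ)+1))) * (2 * b ((K:ℤ)+1))))
        (ε / 2 * (deriv (deriv φ) (2*F) * (2 * b ((K:ℤ)+1)) * (2 * b ((K:ℤ)+1)))) 0 :=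
      HasDerivAt.const_mul (ε/2) (hda_lin2 (2*F) (2 * b ((K:ℤ)+1)) (diffAt_dphi hφ h2F))
    rw [hGdef, hVdef]
    exact (((q1.add q2).add q3).add q4).add q5
  have hinner : ∀ s : ℝ, |s| < δ/2 →
      deriv (fun t : ℝ => EQNL N K ε φ (fun ℓ => yLin ε F ℓ + t • u ℓ + s • u ℓ)) 0 = G s := by
    intro s hs
    have habs : |s| < δ := by linarith
    have hEq : (fun t : ℝ => EQNL N K ε φ (fun ℓ => yLin ε F ℓ + t • u ℓ + s • u ℓ))
        =ᶠ[nhds 0] (fun t : ℝ => g (t + s)) := by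
      have hball : ∀ᶠ t : ℝ in nhds 0, |t| < δ/2 := by
        filter_upwards [Metric.ball_mem_nhds (0:ℝ) (half_pos hδ0)] with t ht
        simpa [Real.dist_eq] using ht
      filter_upwards [hball] with t ht
      have hts : |t + s| < δ := by
        calc |t + s| ≤ |t| + |s| := abs_add_le t s
          _ < δ := by linarith
      have hcomb : (fun ℓ : ℤ => yLin ε F ℓ + t • u ℓ + s • u ℓ)
          = (fun ℓ : ℤ => yLin ε F ℓ + (t + s) • u ℓ) := by
        funext ℓ; rw [add_assoc, ← add_smul]
      rw [hcomb, hE (t+s) hts]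
    rw [hEq.deriv_eq]
    have h1 : HasDerivAt (fun t : ℝ => t + s) 1 0 := (hasDerivAt_id 0).add_const s
    have h2 : HasDerivAt (fun t : ℝ => g (t + s)) (G (0 + s) * 1) 0 :=
      (hgd (0 + s) (by simpa using habs)).comp 0 h1
    simpa using h2.deriv
  have hd2 : d2E (EQNL N K ε φ) (yLin ε F) u u = V := by
    rw [d2E]
    have houter : (fun s : ℝ => deriv (fun t : ℝ =>
        EQNL N K ε φ (fun ℓ => yLin ε F ℓ + t • u ℓ + s • u ℓ)) 0) =ᶠ[nhds 0] G := by
      have hball : ∀ᶠ s : ℝ in nhds 0, |s| < δ/2 := by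
        filter_upwards [Metric.ball_mem_nhds (0:ℝ) (half_pos hδ0)] with s hs
        simpa [Real.dist_eq] using hs
      filter_upwards [hball] with s hs
      exact hinner s hs
    rw [houter.deriv_eq, hVal.deriv]
  -- algebraic identities
  obtain ⟨Q, hQdef⟩ : ∃ Q : ℝ, Q = ∑ ℓ ∈ Finset.Icc (1:ℤ) (N:ℤ), (b ℓ)^2 := ⟨_, rfl⟩
  obtain ⟨S, hSdef⟩ : ∃ S : ℝ, S = ∑ ℓ ∈ Finset.Icc (1:ℤ) (K:ℤ), (b (ℓ+1) - b ℓ)^2 := ⟨_, rfl⟩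
  obtain ⟨T, hTdef⟩ : ∃ T : ℝ, T = ∑ ℓ ∈ Finset.Icc (1:ℤ) (K:ℤ), (b (ℓ+1) + b ℓ)^2 := ⟨_, rfl⟩
  obtain ⟨R, hRdef⟩ : ∃ R : ℝ, R = ∑ ℓ ∈ Finset.Icc ((K:ℤ)+2) (N:ℤ), (b ℓ)^2 := ⟨_, rfl⟩
  have hS0 : 0 ≤ S := hSdef ▸ Finset.sum_nonneg fun ℓ _ => sq_nonneg _
  have hTS : T + S = 2 * (∑ ℓ ∈ Finset.Icc (1:ℤ) (K:ℤ), (b (ℓ+1))^2)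
      + 2 * (∑ ℓ ∈ Finset.Icc (1:ℤ) (K:ℤ), (b ℓ)^2) := by
    rw [hTdef, hSdef, ← Finset.sum_add_distrib, Finset.mul_sum, Finset.mul_sum,
      ← Finset.sum_add_distrib]
    exact Finset.sum_congr rfl fun ℓ _ => by ring
  have hshift : (∑ ℓ ∈ Finset.Icc (1:ℤ) (K:ℤ), (b (ℓ+1))^2)
      = ∑ ℓ ∈ Finset.Icc (2:ℤ) ((K:ℤ)+1), (b ℓ)^2 := by
    have h := sum_shift_s15 (fun ℓ => (b ℓ)^2) 1 (K:ℤ)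
    norm_num at h
    exact h
  have hsplit1 : ∑ ℓ ∈ Finset.Icc (1:ℤ) ((K:ℤ)+1), (b ℓ)^2
      = (b 1)^2 + ∑ ℓ ∈ Finset.Icc (2:ℤ) ((K:ℤ)+1), (b ℓ)^2 := by
    have h : Finset.Icc (1:ℤ) ((K:ℤ)+1) = insert (1:ℤ) (Finset.Icc (2:ℤ) ((K:ℤ)+1)) := by
      ext j
      simp only [Finset.mem_Icc, Finset.mem_insert]
      omega
    rw [h, Finset.sum_insert (by simp)]
  have hsplit2 : ∑ ℓ ∈ Finset.Icc (1:ℤ) ((K:ℤ)+1), (b ℓ)^2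
      = (b ((K:ℤ)+1))^2 + ∑ ℓ ∈ Finset.Icc (1:ℤ) (K:ℤ), (b ℓ)^2 := by
    have h : Finset.Icc (1:ℤ) ((K:ℤ)+1) = insert ((K:ℤ)+1) (Finset.Icc (1:ℤ) (K:ℤ)) := by
      ext j
      simp only [Finset.mem_Icc, Finset.mem_insert]
      omega
    rw [h, Finset.sum_insert (by simp only [Finset.mem_Icc]; omega)]
  have hsplit3 : Q = (∑ ℓ ∈ Finset.Icc (1:ℤ) ((K:ℤ)+1), (b ℓ)^2) + R := by
    rw [hQdef, hRdef, ← Finset.sum_union ?_]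
    · congr 1
      ext j
      simp only [Finset.mem_union, Finset.mem_Icc]
      omega
    · rw [Finset.disjoint_left]
      intro j hj1 hj2
      simp only [Finset.mem_Icc] at hj1 hj2
      omega
  have hbr : T + 4*R + 2*(b 1)^2 + 2*(b ((K:ℤ)+1))^2 = 4*Q - S := by linarith
  have hnrm : (nrm N ε (bd ε u))^2 = ε * Q := by
    rw [nrm, Real.sq_sqrt (mul_nonneg hε0.le (Finset.sum_nonneg fun ℓ _ => sq_nonneg _)),
      hQdef]
    congr 1
    exact Finset.sum_congr rfl fun ℓ _ => by rw [hbdu, enorm2_x, sq_abs]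
  have hVQ : V = (deriv (deriv φ) F + 4 * deriv (deriv φ) (2*F)) * (ε * Q)
      - ε * deriv (deriv φ) (2*F) * S := by
    rw [hVdef]
    have s1 : ∑ ℓ ∈ Finset.Icc (1:ℤ) (N:ℤ), deriv (deriv φ) F * b ℓ * b ℓ
        = deriv (deriv φ) F * Q := by
      rw [hQdef, Finset.mul_sum]
      exact Finset.sum_congr rfl fun ℓ _ => by ring
    have s2 : ∑ ℓ ∈ Finset.Icc (1:ℤ) (K:ℤ),
        deriv (deriv φ) (2*F) * (b (ℓ+1) + b ℓ) * (b (ℓ+1) + b ℓ)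
        = deriv (deriv φ) (2*F) * T := by
      rw [hTdef, Finset.mul_sum]
      exact Finset.sum_congr rfl fun ℓ _ => by ring
    have s3 : ∑ ℓ ∈ Finset.Icc ((K:ℤ)+2) (N:ℤ),
        deriv (deriv φ) (2*F) * (2 * b ℓ) * (2 * b ℓ)
        = 4 * deriv (deriv φ) (2*F) * R := by
      rw [hRdef, Finset.mul_sum]
      exact Finset.sum_congr rfl fun ℓ _ => by ring
    rw [s1, s2, s3]
    linear_combination (ε * deriv (deriv φ) (2*F)) * hbr
  constructor
  · rw [hd2, hnrm, hVQ]
    have hle : ε * deriv (deriv φ) (2*F) * S ≤ 0 :=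
      mul_nonpos_of_nonpos_of_nonneg (mul_nonpos_of_nonneg_of_nonpos hε0.le hφ2) hS0
    linarith
  · intro hz
    have hSz : S = 0 := by
      rw [hSdef]
      apply Finset.sum_eq_zero
      intro ℓ hℓ
      rw [Finset.mem_Icc] at hℓ
      have h0 := hz (ℓ+1) (by omega) (by omega)
      have h1 : bd ε (bd ε u) (ℓ+1) = (ε⁻¹ * (b (ℓ+1) - b ℓ), 0) := by
        rw [bd, hbdu, show (ℓ+1-1 : ℤ) = ℓ from by ring, hbdu]
        refine Prod.ext ?_ ?_
        · simp
        · simp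
      rw [h1] at h0
      have h2 : ε⁻¹ * (b (ℓ+1) - b ℓ) = 0 := by
        have h3 := congrArg Prod.fst h0
        simpa using h3
      have h3 : b (ℓ+1) - b ℓ = 0 := by
        rcases mul_eq_zero.mp h2 with h | h
        · exact absurd h (inv_ne_zero hεne)
        · exact h
      rw [h3]
      norm_num
    rw [hd2, hnrm, hVQ, hSz]
    ring
end
end

section
/- Let y_F be the linear chain with nearest-neighbor spacing Fε and suppose φ'(2F) ≥ 0 and φ''(2F) ≤ 0. Set A = φ''(F) + 4 φ''(2F). Then for every u ∈ 𝒰, δ²E^QNL(y_F)[u,u] ≥ min{ A, φ'(F)/F } ‖u'‖²_{ℓ²_ε(𝔄)} + min{ A, (φ'(F) + 2 φ'(2F))/F } ‖u'‖²_{ℓ²_ε(ℭ)} + min{ A, (φ'(F) + φ'(2F))/F } ‖u'‖²_{ℓ²_ε(ℑ)}, and consequently δ²E^QNL(y_F)[u,u] ≥ min{ A, φ'(F)/F } ‖u'‖²_{ℓ²_ε}. -/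
noncomputable section

open Real Finset

namespace QNLAux

def Qf (r : ℝ) (b : ℝ × ℝ) (x : ℝ) : ℝ := (r + x * b.1) ^ 2 + (x * b.2) ^ 2
def nf (r : ℝ) (b : ℝ × ℝ) (x : ℝ) : ℝ := Real.sqrt (Qf r b x)
def Pf (r : ℝ) (b : ℝ × ℝ) (x : ℝ) : ℝ := (r + x * b.1) * b.1 + (x * b.2) * b.2
def psi (φ : ℝ → ℝ) (c r : ℝ) (b : ℝ × ℝ) (x : ℝ) : ℝ := φ (c * nf r b x)
def D1 (φ : ℝ → ℝ) (c r : ℝ) (b : ℝ × ℝ) (x : ℝ) : ℝ :=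
  deriv φ (c * nf r b x) * (c * (Pf r b x / nf r b x))
def D2val (φ : ℝ → ℝ) (c r : ℝ) (b : ℝ × ℝ) : ℝ :=
  deriv (deriv φ) (c * r) * c ^ 2 * b.1 ^ 2 + deriv φ (c * r) * c * b.2 ^ 2 / r

lemma enorm2_eq (r : ℝ) (b : ℝ × ℝ) (x : ℝ) :
    enorm2 ((r, 0) + x • b) = nf r b x := by
  simp [enorm2, nf, Qf, Prod.smul_def, smul_eq_mul]

lemma hasDerivAt_Qf (r : ℝ) (b : ℝ × ℝ) (x : ℝ) :
    HasDerivAt (Qf r b) (2 * (r + x * b.1) * b.1 + 2 * (x * b.2) * b.2) x := by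
  have h1 : HasDerivAt (fun x : ℝ => r + x * b.1) b.1 x :=
    (hasDerivAt_mul_const b.1).const_add r
  have h2 : HasDerivAt (fun x : ℝ => x * b.2) b.2 x := hasDerivAt_mul_const b.2
  have := (h1.pow 2).add (h2.pow 2)
  exact this.congr_deriv (by norm_num)

lemma hasDerivAt_nf {r : ℝ} {b : ℝ × ℝ} {x : ℝ} (hQ : 0 < Qf r b x) :
    HasDerivAt (nf r b) (Pf r b x / nf r b x) x := by
  have h := (Real.hasDerivAt_sqrt (ne_of_gt hQ)).comp x (hasDerivAt_Qf r b x)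
  refine (h.congr_deriv ?_ : HasDerivAt (nf r b) _ x).congr_deriv rfl
  symm
  have hs : Real.sqrt (Qf r b x) ≠ 0 := by positivity
  unfold nf Pf
  field_simp

lemma eventually_Qf_pos {r : ℝ} (hr : 0 < r) (b : ℝ × ℝ) :
    ∀ᶠ x in nhds (0:ℝ), 0 < Qf r b x := by
  have hc : ContinuousAt (Qf r b) 0 := by unfold Qf; fun_prop
  have h0 : Qf r b 0 ∈ Set.Ioi (0:ℝ) := by simp [Qf]; positivity
  exact hc (isOpen_Ioi.mem_nhds h0)

variable {φ : ℝ → ℝ}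

lemma hasDerivAt_phi (hφ : ContDiffOn ℝ 2 φ (Set.Ioi 0)) {y : ℝ} (hy : 0 < y) :
    HasDerivAt φ (deriv φ y) y :=
  (((hφ.differentiableOn (by norm_num)).differentiableAt
    (isOpen_Ioi.mem_nhds hy))).hasDerivAt

lemma contDiffOn_deriv (hφ : ContDiffOn ℝ 2 φ (Set.Ioi 0)) :
    ContDiffOn ℝ 1 (deriv φ) (Set.Ioi 0) := by
  have h2 : ContDiffOn ℝ (1 + 1) φ (Set.Ioi 0) := by norm_num; exact hφ
  exact ((contDiffOn_succ_iff_deriv_of_isOpen isOpen_Ioi).mp h2).2.2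

lemma hasDerivAt_dphi (hφ : ContDiffOn ℝ 2 φ (Set.Ioi 0)) {y : ℝ} (hy : 0 < y) :
    HasDerivAt (deriv φ) (deriv (deriv φ) y) y :=
  ((((contDiffOn_deriv hφ).differentiableOn (by norm_num)).differentiableAt
    (isOpen_Ioi.mem_nhds hy))).hasDerivAt

lemma hasDerivAt_psi (hφ : ContDiffOn ℝ 2 φ (Set.Ioi 0)) {c r : ℝ} (hc : 0 < c)
    {b : ℝ × ℝ} {x : ℝ} (hQ : 0 < Qf r b x) :
    HasDerivAt (psi φ c r b) (D1 φ c r b x) x := by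
  have hn : 0 < nf r b x := Real.sqrt_pos.mpr hQ
  have hin : HasDerivAt (fun x => c * nf r b x) (c * (Pf r b x / nf r b x)) x :=
    (hasDerivAt_nf hQ).const_mul c
  have hout := hasDerivAt_phi hφ (by positivity : (0:ℝ) < c * nf r b x)
  exact hout.comp x hin

lemma hasDerivAt_D1 (hφ : ContDiffOn ℝ 2 φ (Set.Ioi 0)) {c r : ℝ} (hc : 0 < c)
    (hr : 0 < r) (b : ℝ × ℝ) :
    HasDerivAt (D1 φ c r b) (D2val φ c r b) 0 := by
  have hQ0 : Qf r b 0 = r ^ 2 := by simp [Qf]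
  have hQpos : 0 < Qf r b 0 := by rw [hQ0]; positivity
  have hnf0 : nf r b 0 = r := by rw [nf, hQ0, Real.sqrt_sq hr.le]
  have hPf0 : Pf r b 0 = r * b.1 := by simp [Pf]
  have hn : HasDerivAt (nf r b) (Pf r b 0 / nf r b 0) 0 := hasDerivAt_nf hQpos
  have hcn : HasDerivAt (fun x => c * nf r b x) (c * (Pf r b 0 / nf r b 0)) 0 :=
    hn.const_mul c
  have hdφ : HasDerivAt (deriv φ) (deriv (deriv φ) (c * r)) ((fun x => c * nf r b x) 0) := by
    simp only [hnf0]
    exact hasDerivAt_dphi hφ (by positivity)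
  have hA : HasDerivAt (fun x => deriv φ (c * nf r b x))
      (deriv (deriv φ) (c * r) * (c * (Pf r b 0 / nf r b 0))) 0 := by have := hdφ.comp 0 hcn; exact this
  have hP : HasDerivAt (Pf r b) (b.1 * b.1 + b.2 * b.2) 0 := by
    have h1 : HasDerivAt (fun x : ℝ => (r + x * b.1) * b.1) (b.1 * b.1) 0 :=
      ((hasDerivAt_mul_const b.1).const_add r).mul_const b.1
    have h2 : HasDerivAt (fun x : ℝ => (x * b.2) * b.2) (b.2 * b.2) 0 :=
      (hasDerivAt_mul_const b.2).mul_const b.2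
    exact h1.add h2
  have hne : nf r b 0 ≠ 0 := by rw [hnf0]; exact hr.ne'
  have hdiv : HasDerivAt (fun x => Pf r b x / nf r b x)
      (((b.1 * b.1 + b.2 * b.2) * nf r b 0 - Pf r b 0 * (Pf r b 0 / nf r b 0)) / nf r b 0 ^ 2) 0 :=
    hP.div hn hne
  have hwhole := hA.mul ((hdiv.const_mul c))
  have key : HasDerivAt (D1 φ c r b)
      (deriv (deriv φ) (c * r) * (c * (Pf r b 0 / nf r b 0)) * (c * (Pf r b 0 / nf r b 0)) +
        deriv φ (c * nf r b 0) *
          (c * (((b.1 * b.1 + b.2 * b.2) * nf r b 0 - Pf r b 0 * (Pf r b 0 / nf r b 0)) / nf r b 0 ^ 2))) 0 :=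
    hwhole
  rw [hnf0, hPf0] at key
  convert key using 1
  unfold D2val
  field_simp
  ring

lemma sum_Icc_split (f : ℤ → ℝ) {a b c : ℤ} (h1 : a ≤ b + 1) (h2 : b ≤ c) :
    ∑ ℓ ∈ Finset.Icc a c, f ℓ
      = (∑ ℓ ∈ Finset.Icc a b, f ℓ) + ∑ ℓ ∈ Finset.Icc (b+1) c, f ℓ := by
  rw [← Finset.sum_union]
  · congr 1
    ext x
    simp only [Finset.mem_union, Finset.mem_Icc]
    omega
  · rw [Finset.disjoint_left]
    intro x hx hx'
    simp only [Finset.mem_Icc] at hx hx'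
    omega

lemma sum_shift (f : ℤ → ℝ) (a b : ℤ) :
    ∑ ℓ ∈ Finset.Icc a b, f (ℓ + 1) = ∑ ℓ ∈ Finset.Icc (a+1) (b+1), f ℓ := by
  rw [← Finset.map_add_right_Icc, Finset.sum_map]
  rfl

lemma sum_split4 (f : ℤ → ℝ) {Kz Nz : ℤ} (h1 : 1 < Kz) (h2 : Kz + 2 ≤ Nz) :
    ∑ ℓ ∈ Finset.Icc 1 Nz, f ℓ
      = f 1 + (∑ ℓ ∈ Finset.Icc 2 Kz, f ℓ) + f (Kz+1) + ∑ ℓ ∈ Finset.Icc (Kz+2) Nz, f ℓ := by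
  rw [sum_Icc_split f (show (1:ℤ) ≤ 1 + 1 by omega) (show (1:ℤ) ≤ Nz by omega)]
  rw [show (1:ℤ) + 1 = 2 by norm_num]
  rw [sum_Icc_split f (show (2:ℤ) ≤ Kz + 1 by omega) (show Kz ≤ Nz by omega)]
  rw [sum_Icc_split f (show Kz + 1 ≤ (Kz + 1) + 1 by omega) (show Kz + 1 ≤ Nz by omega)]
  rw [show (Kz + 1) + 1 = Kz + 2 by ring]
  simp [Finset.Icc_self]
  ring

lemma sum_shift_split (f : ℤ → ℝ) {Kz : ℤ} (h1 : 1 < Kz) :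
    ∑ ℓ ∈ Finset.Icc 1 Kz, (f (ℓ+1) + f ℓ)
      = f 1 + f (Kz+1) + 2 * ∑ ℓ ∈ Finset.Icc 2 Kz, f ℓ := by
  rw [Finset.sum_add_distrib, sum_shift f 1 Kz]
  rw [show (1:ℤ) + 1 = 2 by norm_num]
  rw [sum_Icc_split f (show (2:ℤ) ≤ Kz + 1 by omega) (show Kz ≤ Kz + 1 by omega)]
  rw [sum_Icc_split f (show (1:ℤ) ≤ 1 + 1 by omega) (show (1:ℤ) ≤ Kz by omega)]
  rw [show (1:ℤ) + 1 = 2 by norm_num]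
  simp [Finset.Icc_self]
  ring

end QNLAux

namespace QNLAux

lemma bd_affine (ε : ℝ) (y u : ℤ → ℝ × ℝ) (t s : ℝ) (ℓ : ℤ) :
    bd ε (fun m => y m + t • u m + s • u m) ℓ = bd ε y ℓ + (t + s) • bd ε u ℓ := by
  unfold bd
  rw [smul_comm (t+s) ε⁻¹, ← smul_add]
  congr 1
  module

lemma bd_yLin {ε : ℝ} (hε : ε ≠ 0) (F : ℝ) (ℓ : ℤ) :
    bd ε (yLin ε F) ℓ = (F, 0) := by
  unfold bd yLin
  rw [Prod.ext_iff]
  simp [Prod.smul_def, smul_eq_mul]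
  field_simp
  ring

def gE (φ : ℝ → ℝ) (N K : ℕ) (ε F : ℝ) (w : ℤ → ℝ × ℝ) (x : ℝ) : ℝ :=
  ε * ∑ ℓ ∈ Finset.Icc (1 : ℤ) (N : ℤ), psi φ 1 F (w ℓ) x
  + ε * ∑ ℓ ∈ Finset.Icc (1 : ℤ) (K : ℤ), psi φ 1 (2*F) (w (ℓ+1) + w ℓ) x
  + ε * ∑ ℓ ∈ Finset.Icc ((K : ℤ) + 2) (N : ℤ), psi φ 2 F (w ℓ) x
  + ε / 2 * psi φ 2 F (w 1) x + ε / 2 * psi φ 2 F (w ((K : ℤ) + 1)) x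

def GE (φ : ℝ → ℝ) (N K : ℕ) (ε F : ℝ) (w : ℤ → ℝ × ℝ) (x : ℝ) : ℝ :=
  ε * ∑ ℓ ∈ Finset.Icc (1 : ℤ) (N : ℤ), D1 φ 1 F (w ℓ) x
  + ε * ∑ ℓ ∈ Finset.Icc (1 : ℤ) (K : ℤ), D1 φ 1 (2*F) (w (ℓ+1) + w ℓ) x
  + ε * ∑ ℓ ∈ Finset.Icc ((K : ℤ) + 2) (N : ℤ), D1 φ 2 F (w ℓ) x
  + ε / 2 * D1 φ 2 F (w 1) x + ε / 2 * D1 φ 2 F (w ((K : ℤ) + 1)) x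

def Vv (φ : ℝ → ℝ) (N K : ℕ) (ε F : ℝ) (w : ℤ → ℝ × ℝ) : ℝ :=
  ε * ∑ ℓ ∈ Finset.Icc (1 : ℤ) (N : ℤ), D2val φ 1 F (w ℓ)
  + ε * ∑ ℓ ∈ Finset.Icc (1 : ℤ) (K : ℤ), D2val φ 1 (2*F) (w (ℓ+1) + w ℓ)
  + ε * ∑ ℓ ∈ Finset.Icc ((K : ℤ) + 2) (N : ℤ), D2val φ 2 F (w ℓ)
  + ε / 2 * D2val φ 2 F (w 1) + ε / 2 * D2val φ 2 F (w ((K : ℤ) + 1))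

variable {φ : ℝ → ℝ}

lemma hasDerivAt_gE (hφ : ContDiffOn ℝ 2 φ (Set.Ioi 0)) {F : ℝ} (hF : 0 < F)
    (N K : ℕ) (ε : ℝ) (w : ℤ → ℝ × ℝ) :
    ∀ᶠ x in nhds (0:ℝ), HasDerivAt (gE φ N K ε F w) (GE φ N K ε F w x) x := by
  have h2F : (0:ℝ) < 2 * F := by linarith
  have hev1 : ∀ᶠ x in nhds (0:ℝ), ∀ ℓ ∈ Finset.Icc (1:ℤ) (N:ℤ), 0 < Qf F (w ℓ) x :=
    (Filter.eventually_all_finset _).mpr fun ℓ _ => eventually_Qf_pos hF (w ℓ)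
  have hev2 : ∀ᶠ x in nhds (0:ℝ), ∀ ℓ ∈ Finset.Icc (1:ℤ) (K:ℤ), 0 < Qf (2*F) (w (ℓ+1) + w ℓ) x :=
    (Filter.eventually_all_finset _).mpr fun ℓ _ => eventually_Qf_pos h2F _
  have hev3 : ∀ᶠ x in nhds (0:ℝ), ∀ ℓ ∈ Finset.Icc ((K:ℤ)+2) (N:ℤ), 0 < Qf F (w ℓ) x :=
    (Filter.eventually_all_finset _).mpr fun ℓ _ => eventually_Qf_pos hF (w ℓ)
  have hev4 := eventually_Qf_pos hF (w 1)
  have hev5 := eventually_Qf_pos hF (w ((K:ℤ)+1))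
  filter_upwards [hev1, hev2, hev3, hev4, hev5] with x h1 h2 h3 h4 h5
  unfold gE GE
  exact ((((((HasDerivAt.fun_sum fun ℓ hℓ => hasDerivAt_psi hφ one_pos (h1 ℓ hℓ)).const_mul ε).add
      ((HasDerivAt.fun_sum fun ℓ hℓ => hasDerivAt_psi hφ one_pos (h2 ℓ hℓ)).const_mul ε)).add
      ((HasDerivAt.fun_sum fun ℓ hℓ => hasDerivAt_psi hφ two_pos (h3 ℓ hℓ)).const_mul ε)).add
      ((hasDerivAt_psi hφ two_pos h4).const_mul (ε/2))).add
      ((hasDerivAt_psi hφ two_pos h5).const_mul (ε/2)))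

lemma hasDerivAt_GE (hφ : ContDiffOn ℝ 2 φ (Set.Ioi 0)) {F : ℝ} (hF : 0 < F)
    (N K : ℕ) (ε : ℝ) (w : ℤ → ℝ × ℝ) :
    HasDerivAt (GE φ N K ε F w) (Vv φ N K ε F w) 0 := by
  have h2F : (0:ℝ) < 2 * F := by linarith
  unfold GE Vv
  exact ((((((HasDerivAt.fun_sum fun ℓ _ => hasDerivAt_D1 hφ one_pos hF (w ℓ)).const_mul ε).add
      ((HasDerivAt.fun_sum fun ℓ _ => hasDerivAt_D1 hφ one_pos h2F _).const_mul ε)).add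
      ((HasDerivAt.fun_sum fun ℓ _ => hasDerivAt_D1 hφ two_pos hF (w ℓ)).const_mul ε)).add
      ((hasDerivAt_D1 hφ two_pos hF (w 1)).const_mul (ε/2))).add
      ((hasDerivAt_D1 hφ two_pos hF (w ((K:ℤ)+1))).const_mul (ε/2)))

lemma EQNL_eq_gE {ε : ℝ} (hε : ε ≠ 0) (N K : ℕ) (F : ℝ) (u : ℤ → ℝ × ℝ) (t s : ℝ) :
    EQNL N K ε φ (fun ℓ => yLin ε F ℓ + t • u ℓ + s • u ℓ)
      = gE φ N K ε F (bd ε u) (t + s) := by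
  have hb : ∀ ℓ : ℤ, bd ε (fun m => yLin ε F m + t • u m + s • u m) ℓ
      = (F, 0) + (t + s) • bd ε u ℓ := fun ℓ => by rw [bd_affine, bd_yLin hε]
  have hb2 : ∀ ℓ : ℤ, bd ε (fun m => yLin ε F m + t • u m + s • u m) (ℓ+1)
      + bd ε (fun m => yLin ε F m + t • u m + s • u m) ℓ
      = ((2*F, 0) : ℝ × ℝ) + (t + s) • (bd ε u (ℓ+1) + bd ε u ℓ) := by
    intro ℓ
    rw [hb, hb, smul_add]
    have : ((2*F, 0) : ℝ × ℝ) = (F, 0) + (F, 0) := by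
      rw [Prod.mk_add_mk]; norm_num; ring
    rw [this]
    abel
  have e1 : ∑ ℓ ∈ Finset.Icc (1:ℤ) (N:ℤ),
      φ (enorm2 (bd ε (fun m => yLin ε F m + t • u m + s • u m) ℓ))
      = ∑ ℓ ∈ Finset.Icc (1:ℤ) (N:ℤ), psi φ 1 F (bd ε u ℓ) (t+s) :=
    Finset.sum_congr rfl fun ℓ _ => by rw [psi, one_mul, hb, enorm2_eq]
  have e2 : ∑ ℓ ∈ Finset.Icc (1:ℤ) (K:ℤ),
      φ (enorm2 (bd ε (fun m => yLin ε F m + t • u m + s • u m) (ℓ+1)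
        + bd ε (fun m => yLin ε F m + t • u m + s • u m) ℓ))
      = ∑ ℓ ∈ Finset.Icc (1:ℤ) (K:ℤ), psi φ 1 (2*F) (bd ε u (ℓ+1) + bd ε u ℓ) (t+s) :=
    Finset.sum_congr rfl fun ℓ _ => by rw [psi, one_mul, hb2, enorm2_eq]
  have e3 : ∑ ℓ ∈ Finset.Icc ((K:ℤ)+2) (N:ℤ),
      φ (2 * enorm2 (bd ε (fun m => yLin ε F m + t • u m + s • u m) ℓ))
      = ∑ ℓ ∈ Finset.Icc ((K:ℤ)+2) (N:ℤ), psi φ 2 F (bd ε u ℓ) (t+s) :=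
    Finset.sum_congr rfl fun ℓ _ => by rw [psi, hb, enorm2_eq]
  have e4 : φ (2 * enorm2 (bd ε (fun m => yLin ε F m + t • u m + s • u m) 1))
      = psi φ 2 F (bd ε u 1) (t+s) := by rw [psi, hb, enorm2_eq]
  have e5 : φ (2 * enorm2 (bd ε (fun m => yLin ε F m + t • u m + s • u m) ((K:ℤ)+1)))
      = psi φ 2 F (bd ε u ((K:ℤ)+1)) (t+s) := by rw [psi, hb, enorm2_eq]
  rw [EQNL, gE, e1, e2, e3, e4, e5]

end QNLAux

namespace QNLAux

variable {φ : ℝ → ℝ} {F : ℝ}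

lemma enorm2_sq (b : ℝ × ℝ) : enorm2 b ^ 2 = b.1 ^ 2 + b.2 ^ 2 :=
  Real.sq_sqrt (by positivity)

lemma ineq_A (hF : 0 < F) (b : ℝ × ℝ) :
    min (deriv (deriv φ) F + 4 * deriv (deriv φ) (2 * F)) (deriv φ F / F) * enorm2 b ^ 2
      ≤ D2val φ 1 F b + 4 * deriv (deriv φ) (2 * F) * b.1 ^ 2 := by
  have h1 := mul_le_mul_of_nonneg_right
    (min_le_left (deriv (deriv φ) F + 4 * deriv (deriv φ) (2 * F)) (deriv φ F / F))
    (sq_nonneg b.1)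
  have h2 := mul_le_mul_of_nonneg_right
    (min_le_right (deriv (deriv φ) F + 4 * deriv (deriv φ) (2 * F)) (deriv φ F / F))
    (sq_nonneg b.2)
  rw [enorm2_sq]
  simp only [D2val, one_mul, mul_one, one_pow]
  calc min (deriv (deriv φ) F + 4 * deriv (deriv φ) (2 * F)) (deriv φ F / F) * (b.1 ^ 2 + b.2 ^ 2)
      = min (deriv (deriv φ) F + 4 * deriv (deriv φ) (2 * F)) (deriv φ F / F) * b.1 ^ 2
        + min (deriv (deriv φ) F + 4 * deriv (deriv φ) (2 * F)) (deriv φ F / F) * b.2 ^ 2 := by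
        ring
    _ ≤ (deriv (deriv φ) F + 4 * deriv (deriv φ) (2 * F)) * b.1 ^ 2
        + deriv φ F / F * b.2 ^ 2 := add_le_add h1 h2
    _ = deriv (deriv φ) F * b.1 ^ 2 + deriv φ F * b.2 ^ 2 / F
        + 4 * deriv (deriv φ) (2 * F) * b.1 ^ 2 := by ring

lemma ineq_C (hF : 0 < F) (b : ℝ × ℝ) :
    min (deriv (deriv φ) F + 4 * deriv (deriv φ) (2 * F))
        ((deriv φ F + 2 * deriv φ (2 * F)) / F) * enorm2 b ^ 2
      ≤ D2val φ 1 F b + D2val φ 2 F b := by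
  have h1 := mul_le_mul_of_nonneg_right
    (min_le_left (deriv (deriv φ) F + 4 * deriv (deriv φ) (2 * F))
      ((deriv φ F + 2 * deriv φ (2 * F)) / F)) (sq_nonneg b.1)
  have h2 := mul_le_mul_of_nonneg_right
    (min_le_right (deriv (deriv φ) F + 4 * deriv (deriv φ) (2 * F))
      ((deriv φ F + 2 * deriv φ (2 * F)) / F)) (sq_nonneg b.2)
  rw [enorm2_sq]
  simp only [D2val, one_mul, mul_one, one_pow]
  calc min (deriv (deriv φ) F + 4 * deriv (deriv φ) (2 * F))
        ((deriv φ F + 2 * deriv φ (2 * F)) / F) * (b.1 ^ 2 + b.2 ^ 2)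
      = min (deriv (deriv φ) F + 4 * deriv (deriv φ) (2 * F))
          ((deriv φ F + 2 * deriv φ (2 * F)) / F) * b.1 ^ 2
        + min (deriv (deriv φ) F + 4 * deriv (deriv φ) (2 * F))
          ((deriv φ F + 2 * deriv φ (2 * F)) / F) * b.2 ^ 2 := by ring
    _ ≤ (deriv (deriv φ) F + 4 * deriv (deriv φ) (2 * F)) * b.1 ^ 2
        + (deriv φ F + 2 * deriv φ (2 * F)) / F * b.2 ^ 2 := add_le_add h1 h2
    _ = deriv (deriv φ) F * b.1 ^ 2 + deriv φ F * b.2 ^ 2 / F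
        + (deriv (deriv φ) (2 * F) * 2 ^ 2 * b.1 ^ 2 + deriv φ (2 * F) * 2 * b.2 ^ 2 / F) := by
        ring

lemma ineq_I (hF : 0 < F) (b : ℝ × ℝ) :
    min (deriv (deriv φ) F + 4 * deriv (deriv φ) (2 * F))
        ((deriv φ F + deriv φ (2 * F)) / F) * enorm2 b ^ 2
      ≤ D2val φ 1 F b + 2 * deriv (deriv φ) (2 * F) * b.1 ^ 2 + 1/2 * D2val φ 2 F b := by
  have h1 := mul_le_mul_of_nonneg_right
    (min_le_left (deriv (deriv φ) F + 4 * deriv (deriv φ) (2 * F))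
      ((deriv φ F + deriv φ (2 * F)) / F)) (sq_nonneg b.1)
  have h2 := mul_le_mul_of_nonneg_right
    (min_le_right (deriv (deriv φ) F + 4 * deriv (deriv φ) (2 * F))
      ((deriv φ F + deriv φ (2 * F)) / F)) (sq_nonneg b.2)
  rw [enorm2_sq]
  simp only [D2val, one_mul, mul_one, one_pow]
  calc min (deriv (deriv φ) F + 4 * deriv (deriv φ) (2 * F))
        ((deriv φ F + deriv φ (2 * F)) / F) * (b.1 ^ 2 + b.2 ^ 2)
      = min (deriv (deriv φ) F + 4 * deriv (deriv φ) (2 * F))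
          ((deriv φ F + deriv φ (2 * F)) / F) * b.1 ^ 2
        + min (deriv (deriv φ) F + 4 * deriv (deriv φ) (2 * F))
          ((deriv φ F + deriv φ (2 * F)) / F) * b.2 ^ 2 := by ring
    _ ≤ (deriv (deriv φ) F + 4 * deriv (deriv φ) (2 * F)) * b.1 ^ 2
        + (deriv φ F + deriv φ (2 * F)) / F * b.2 ^ 2 := add_le_add h1 h2
    _ = deriv (deriv φ) F * b.1 ^ 2 + deriv φ F * b.2 ^ 2 / F
        + 2 * deriv (deriv φ) (2 * F) * b.1 ^ 2
        + 1/2 * (deriv (deriv φ) (2 * F) * 2 ^ 2 * b.1 ^ 2 + deriv φ (2 * F) * 2 * b.2 ^ 2 / F) := by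
        ring

lemma ineq_2 (hF : 0 < F) (hφ1 : 0 ≤ deriv φ (2 * F))
    (hφ2 : deriv (deriv φ) (2 * F) ≤ 0) (b' b : ℝ × ℝ) :
    2 * deriv (deriv φ) (2 * F) * (b'.1 ^ 2 + b.1 ^ 2) ≤ D2val φ 1 (2*F) (b' + b) := by
  simp only [D2val, one_mul, mul_one, one_pow, Prod.fst_add, Prod.snd_add]
  have h0 : 0 ≤ deriv φ (2 * F) * (b'.2 + b.2) ^ 2 / (2 * F) :=
    div_nonneg (mul_nonneg hφ1 (sq_nonneg _)) (by linarith)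
  have hp : deriv (deriv φ) (2 * F) * (b'.1 - b.1) ^ 2 ≤ 0 :=
    mul_nonpos_of_nonpos_of_nonneg hφ2 (sq_nonneg _)
  calc 2 * deriv (deriv φ) (2 * F) * (b'.1 ^ 2 + b.1 ^ 2)
      = deriv (deriv φ) (2 * F) * (b'.1 + b.1) ^ 2
        + deriv (deriv φ) (2 * F) * (b'.1 - b.1) ^ 2 := by ring
    _ ≤ deriv (deriv φ) (2 * F) * (b'.1 + b.1) ^ 2 + 0 := add_le_add_right hp _
    _ ≤ deriv (deriv φ) (2 * F) * (b'.1 + b.1) ^ 2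
        + deriv φ (2 * F) * (b'.2 + b.2) ^ 2 / (2 * F) := add_le_add_right h0 _
    _ = deriv (deriv φ) (2 * F) * (b'.1 + b.1) ^ 2
        + deriv φ (2 * F) * (b'.2 + b.2) ^ 2 / (2 * F) := rfl

end QNLAux

theorem stmt_16 (N : ℕ) (hN : 4 ≤ N) (ε : ℝ) (hε : ε = (N : ℝ)⁻¹)
    (φ : ℝ → ℝ) (hφ : ContDiffOn ℝ 2 φ (Set.Ioi 0)) (F : ℝ) (hF : 0 < F)
    (K : ℕ) (hK1 : 1 < K) (hK2 : K + 2 < N)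
    (hφ1 : 0 ≤ deriv φ (2 * F)) (hφ2 : deriv (deriv φ) (2 * F) ≤ 0) :
    ∀ u : ℤ → ℝ × ℝ, IsDisp N u →
      d2E (EQNL N K ε φ) (yLin ε F) u u ≥
        min (deriv (deriv φ) F + 4 * deriv (deriv φ) (2 * F)) (deriv φ F / F) *
          (ε * ∑ ℓ ∈ Finset.Icc (2 : ℤ) (K : ℤ), (enorm2 (bd ε u ℓ)) ^ 2)
        + min (deriv (deriv φ) F + 4 * deriv (deriv φ) (2 * F))
            ((deriv φ F + 2 * deriv φ (2 * F)) / F) *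
          (ε * ∑ ℓ ∈ Finset.Icc ((K : ℤ) + 2) (N : ℤ), (enorm2 (bd ε u ℓ)) ^ 2)
        + min (deriv (deriv φ) F + 4 * deriv (deriv φ) (2 * F))
            ((deriv φ F + deriv φ (2 * F)) / F) *
          (ε * (enorm2 (bd ε u 1)) ^ 2 + ε * (enorm2 (bd ε u ((K : ℤ) + 1))) ^ 2) ∧
      d2E (EQNL N K ε φ) (yLin ε F) u u ≥
        min (deriv (deriv φ) F + 4 * deriv (deriv φ) (2 * F)) (deriv φ F / F) *
          (nrm N ε (bd ε u)) ^ 2 := by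
  intro u _
  have hNpos : (0:ℝ) < (N:ℝ) := by
    have : 0 < N := by omega
    exact_mod_cast this
  have hεpos : (0:ℝ) < ε := by rw [hε]; exact inv_pos.mpr hNpos
  have hεne : ε ≠ 0 := hεpos.ne'
  have hKz : (1:ℤ) < (K:ℤ) := by exact_mod_cast hK1
  have hKN : (K:ℤ) + 2 ≤ (N:ℤ) := by exact_mod_cast Nat.le_of_lt hK2
  -- identify the second variation
  have hd2 : d2E (EQNL N K ε φ) (yLin ε F) u u = QNLAux.Vv φ N K ε F (bd ε u) := by
    have hgev := QNLAux.hasDerivAt_gE hφ hF N K ε (bd ε u)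
    have hinner : (fun s : ℝ => deriv (fun t : ℝ =>
        EQNL N K ε φ (fun ℓ => yLin ε F ℓ + t • u ℓ + s • u ℓ)) 0)
        =ᶠ[nhds 0] QNLAux.GE φ N K ε F (bd ε u) := by
      filter_upwards [hgev] with s hs
      have h1 : (fun t : ℝ => EQNL N K ε φ (fun ℓ => yLin ε F ℓ + t • u ℓ + s • u ℓ))
          = fun t : ℝ => QNLAux.gE φ N K ε F (bd ε u) (t + s) :=
        funext fun t => QNLAux.EQNL_eq_gE hεne N K F u t s
      rw [h1]
      have hid : HasDerivAt (fun t : ℝ => t + s) 1 0 := (hasDerivAt_id 0).add_const s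
      have hs' : HasDerivAt (QNLAux.gE φ N K ε F (bd ε u))
          (QNLAux.GE φ N K ε F (bd ε u) s) ((fun t : ℝ => t + s) 0) := by simpa using hs
      simpa [Function.comp_def] using (hs'.comp 0 hid).deriv
    unfold d2E
    rw [hinner.deriv_eq, (QNLAux.hasDerivAt_GE hφ hF N K ε (bd ε u)).deriv]
  -- first estimate
  have key1 : d2E (EQNL N K ε φ) (yLin ε F) u u ≥
      min (deriv (deriv φ) F + 4 * deriv (deriv φ) (2 * F)) (deriv φ F / F) *
        (ε * ∑ ℓ ∈ Finset.Icc (2 : ℤ) (K : ℤ), (enorm2 (bd ε u ℓ)) ^ 2)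
      + min (deriv (deriv φ) F + 4 * deriv (deriv φ) (2 * F))
          ((deriv φ F + 2 * deriv φ (2 * F)) / F) *
        (ε * ∑ ℓ ∈ Finset.Icc ((K : ℤ) + 2) (N : ℤ), (enorm2 (bd ε u ℓ)) ^ 2)
      + min (deriv (deriv φ) F + 4 * deriv (deriv φ) (2 * F))
          ((deriv φ F + deriv φ (2 * F)) / F) *
        (ε * (enorm2 (bd ε u 1)) ^ 2 + ε * (enorm2 (bd ε u ((K : ℤ) + 1))) ^ 2) := by
    rw [hd2]
    unfold QNLAux.Vv
    -- split the nearest-neighbour sum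
    have hS1 := QNLAux.sum_split4 (fun ℓ => QNLAux.D2val φ 1 F (bd ε u ℓ)) hKz hKN
    have hS1' : ε * ∑ ℓ ∈ Finset.Icc (1:ℤ) (N:ℤ), QNLAux.D2val φ 1 F (bd ε u ℓ)
        = ε * (QNLAux.D2val φ 1 F (bd ε u 1)
          + (∑ ℓ ∈ Finset.Icc (2:ℤ) (K:ℤ), QNLAux.D2val φ 1 F (bd ε u ℓ))
          + QNLAux.D2val φ 1 F (bd ε u ((K:ℤ)+1))
          + ∑ ℓ ∈ Finset.Icc ((K:ℤ)+2) (N:ℤ), QNLAux.D2val φ 1 F (bd ε u ℓ)) := by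
      rw [hS1]
    -- second-neighbour sum lower bound
    have hb2 : ∑ ℓ ∈ Finset.Icc (1:ℤ) (K:ℤ),
          (2 * deriv (deriv φ) (2 * F) * ((bd ε u (ℓ+1)).1 ^ 2 + (bd ε u ℓ).1 ^ 2))
        ≤ ∑ ℓ ∈ Finset.Icc (1:ℤ) (K:ℤ), QNLAux.D2val φ 1 (2*F) (bd ε u (ℓ+1) + bd ε u ℓ) :=
      Finset.sum_le_sum fun ℓ _ => QNLAux.ineq_2 hF hφ1 hφ2 _ _
    have hb2' : ∑ ℓ ∈ Finset.Icc (1:ℤ) (K:ℤ),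
          (2 * deriv (deriv φ) (2 * F) * ((bd ε u (ℓ+1)).1 ^ 2 + (bd ε u ℓ).1 ^ 2))
        = 2 * deriv (deriv φ) (2 * F) * ((bd ε u 1).1 ^ 2 + (bd ε u ((K:ℤ)+1)).1 ^ 2
            + 2 * ∑ ℓ ∈ Finset.Icc (2:ℤ) (K:ℤ), (bd ε u ℓ).1 ^ 2) := by
      rw [← Finset.mul_sum, QNLAux.sum_shift_split (fun ℓ => (bd ε u ℓ).1 ^ 2) hKz]
    have mb2 : ε * (2 * deriv (deriv φ) (2 * F) * ((bd ε u 1).1 ^ 2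
          + (bd ε u ((K:ℤ)+1)).1 ^ 2
          + 2 * ∑ ℓ ∈ Finset.Icc (2:ℤ) (K:ℤ), (bd ε u ℓ).1 ^ 2))
        ≤ ε * ∑ ℓ ∈ Finset.Icc (1:ℤ) (K:ℤ), QNLAux.D2val φ 1 (2*F) (bd ε u (ℓ+1) + bd ε u ℓ) :=
      mul_le_mul_of_nonneg_left (hb2' ▸ hb2) hεpos.le
    -- region bounds
    have hA : min (deriv (deriv φ) F + 4 * deriv (deriv φ) (2 * F)) (deriv φ F / F) *
          ∑ ℓ ∈ Finset.Icc (2:ℤ) (K:ℤ), enorm2 (bd ε u ℓ) ^ 2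
        ≤ (∑ ℓ ∈ Finset.Icc (2:ℤ) (K:ℤ), QNLAux.D2val φ 1 F (bd ε u ℓ))
          + 4 * deriv (deriv φ) (2 * F) * ∑ ℓ ∈ Finset.Icc (2:ℤ) (K:ℤ), (bd ε u ℓ).1 ^ 2 := by
      rw [Finset.mul_sum, Finset.mul_sum, ← Finset.sum_add_distrib]
      exact Finset.sum_le_sum fun ℓ _ => QNLAux.ineq_A hF (bd ε u ℓ)
    have mA := mul_le_mul_of_nonneg_left hA hεpos.le
    have hC : min (deriv (deriv φ) F + 4 * deriv (deriv φ) (2 * F))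
          ((deriv φ F + 2 * deriv φ (2 * F)) / F) *
          ∑ ℓ ∈ Finset.Icc ((K:ℤ)+2) (N:ℤ), enorm2 (bd ε u ℓ) ^ 2
        ≤ (∑ ℓ ∈ Finset.Icc ((K:ℤ)+2) (N:ℤ), QNLAux.D2val φ 1 F (bd ε u ℓ))
          + ∑ ℓ ∈ Finset.Icc ((K:ℤ)+2) (N:ℤ), QNLAux.D2val φ 2 F (bd ε u ℓ) := by
      rw [Finset.mul_sum, ← Finset.sum_add_distrib]
      exact Finset.sum_le_sum fun ℓ _ => QNLAux.ineq_C hF (bd ε u ℓ)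
    have mC := mul_le_mul_of_nonneg_left hC hεpos.le
    have mI1 := mul_le_mul_of_nonneg_left (QNLAux.ineq_I (φ := φ) hF (bd ε u 1)) hεpos.le
    have mI2 := mul_le_mul_of_nonneg_left
      (QNLAux.ineq_I (φ := φ) hF (bd ε u ((K:ℤ)+1))) hεpos.le
    linarith [mA, mC, mI1, mI2, mb2, hS1']
  refine ⟨key1, ?_⟩
  -- second estimate
  have hnrm : nrm N ε (bd ε u) ^ 2
      = ε * ∑ ℓ ∈ Finset.Icc (1:ℤ) (N:ℤ), enorm2 (bd ε u ℓ) ^ 2 := by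
    unfold nrm
    exact Real.sq_sqrt (mul_nonneg hεpos.le (Finset.sum_nonneg fun ℓ _ => sq_nonneg _))
  have hE := QNLAux.sum_split4 (fun ℓ => enorm2 (bd ε u ℓ) ^ 2) hKz hKN
  have hEA : (0:ℝ) ≤ ∑ ℓ ∈ Finset.Icc (2:ℤ) (K:ℤ), enorm2 (bd ε u ℓ) ^ 2 :=
    Finset.sum_nonneg fun ℓ _ => sq_nonneg _
  have hEC : (0:ℝ) ≤ ∑ ℓ ∈ Finset.Icc ((K:ℤ)+2) (N:ℤ), enorm2 (bd ε u ℓ) ^ 2 :=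
    Finset.sum_nonneg fun ℓ _ => sq_nonneg _
  have hdiv2 : deriv φ F / F ≤ (deriv φ F + 2 * deriv φ (2 * F)) / F :=
    (div_le_div_iff_of_pos_right hF).mpr (by linarith)
  have hdiv3 : deriv φ F / F ≤ (deriv φ F + deriv φ (2 * F)) / F :=
    (div_le_div_iff_of_pos_right hF).mpr (by linarith)
  have hm12 : min (deriv (deriv φ) F + 4 * deriv (deriv φ) (2 * F)) (deriv φ F / F)
      ≤ min (deriv (deriv φ) F + 4 * deriv (deriv φ) (2 * F))
        ((deriv φ F + 2 * deriv φ (2 * F)) / F) := min_le_min le_rfl hdiv2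
  have hm13 : min (deriv (deriv φ) F + 4 * deriv (deriv φ) (2 * F)) (deriv φ F / F)
      ≤ min (deriv (deriv φ) F + 4 * deriv (deriv φ) (2 * F))
        ((deriv φ F + deriv φ (2 * F)) / F) := min_le_min le_rfl hdiv3
  have s2 := mul_le_mul_of_nonneg_right hm12 (mul_nonneg hεpos.le hEC)
  have s3 := mul_le_mul_of_nonneg_right hm13
    (by positivity : (0:ℝ) ≤ ε * enorm2 (bd ε u 1) ^ 2 + ε * enorm2 (bd ε u ((K:ℤ)+1)) ^ 2)
  have hnrm2 : min (deriv (deriv φ) F + 4 * deriv (deriv φ) (2 * F)) (deriv φ F / F) *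
      nrm N ε (bd ε u) ^ 2
      = min (deriv (deriv φ) F + 4 * deriv (deriv φ) (2 * F)) (deriv φ F / F) *
        (ε * (enorm2 (bd ε u 1) ^ 2
          + (∑ ℓ ∈ Finset.Icc (2:ℤ) (K:ℤ), enorm2 (bd ε u ℓ) ^ 2)
          + enorm2 (bd ε u ((K:ℤ)+1)) ^ 2
          + ∑ ℓ ∈ Finset.Icc ((K:ℤ)+2) (N:ℤ), enorm2 (bd ε u ℓ) ^ 2)) := by
    rw [hnrm, hE]
  linarith [key1, s2, s3, hnrm2]
end
end
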